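/- arXiv:1606.06810 — 9 statements merged into one kernel-verified Lean document; each statement's English description precedes it below -/
import Mathlib

section
/- Let G be a graph on n vertices and let T be a set of t vertices of G such that every vertex in T has fewer than (n-t+2)/2 non-neighbors in G. Then G contains a strong immersion of K_t with T as the set of branch (end) vertices; moreover the immersion can be chosen so that each pair of non-adjacent vertices of T is joined by a path of length two whose internal vertex lies outside T, with all these paths pairwise edge-disjoint. -/
open SimpleGraph

/-- The number of ordered pairs of distinct non-adjacent vertices within `T`
(twice the number of missing edges of `T`). -/
noncomputable def missingPairs {V : Type*} (G : SimpleGraph V) (T : Set V) : ℕ :=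
  {p : V × V | p.1 ∈ T ∧ p.2 ∈ T ∧ p.1 ≠ p.2 ∧ ¬ G.Adj p.1 p.2}.ncard

/-- The number of cliques of `G`, including the empty clique. -/
noncomputable def cliqueCount {V : Type*} [Fintype V] (G : SimpleGraph V) : ℕ :=
  {s : Finset V | G.IsClique (s : Set V)}.ncard

/-- A family of pairwise edge-disjoint paths joining all pairs of distinct vertices of `T`,
with no internal vertex in `T`: a strong `K_{|T|}`-immersion with end vertices `T`. -/
def IsStrongImmersionFamily {V : Type*} (G : SimpleGraph V) (T : Finset V)
    (P : ∀ u v : V, u ∈ T → v ∈ T → u ≠ v → G.Walk u v) : Prop :=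
  (∀ (u v : V) (hu : u ∈ T) (hv : v ∈ T) (h : u ≠ v), (P u v hu hv h).IsPath) ∧
  (∀ (u v : V) (hu : u ∈ T) (hv : v ∈ T) (h : u ≠ v),
    ∀ w ∈ (P u v hu hv h).support, w ∈ T → w = u ∨ w = v) ∧
  (∀ (u v : V) (hu : u ∈ T) (hv : v ∈ T) (h : u ≠ v)
    (u' v' : V) (hu' : u' ∈ T) (hv' : v' ∈ T) (h' : u' ≠ v'), s(u, v) ≠ s(u', v') →
    ∀ e ∈ (P u v hu hv h).edges, e ∉ (P u' v' hu' hv' h').edges)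

/-- A family of pairwise edge-disjoint paths joining all pairs of distinct vertices of `T`:
a weak `K_{|T|}`-immersion with end vertices `T`. -/
def IsWeakImmersionFamily {V : Type*} (G : SimpleGraph V) (T : Finset V)
    (P : ∀ u v : V, u ∈ T → v ∈ T → u ≠ v → G.Walk u v) : Prop :=
  (∀ (u v : V) (hu : u ∈ T) (hv : v ∈ T) (h : u ≠ v), (P u v hu hv h).IsPath) ∧
  (∀ (u v : V) (hu : u ∈ T) (hv : v ∈ T) (h : u ≠ v)
    (u' v' : V) (hu' : u' ∈ T) (hv' : v' ∈ T) (h' : u' ≠ v'), s(u, v) ≠ s(u', v') →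
    ∀ e ∈ (P u v hu hv h).edges, e ∉ (P u' v' hu' hv' h').edges)

/-- A family of internally vertex-disjoint paths joining all pairs of distinct vertices of `T`,
with no internal vertex in `T`: a `K_{|T|}`-subdivision with branch vertices `T`. -/
def IsSubdivisionFamily {V : Type*} (G : SimpleGraph V) (T : Finset V)
    (P : ∀ u v : V, u ∈ T → v ∈ T → u ≠ v → G.Walk u v) : Prop :=
  (∀ (u v : V) (hu : u ∈ T) (hv : v ∈ T) (h : u ≠ v), (P u v hu hv h).IsPath) ∧
  (∀ (u v : V) (hu : u ∈ T) (hv : v ∈ T) (h : u ≠ v),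
    ∀ w ∈ (P u v hu hv h).support, w ∈ T → w = u ∨ w = v) ∧
  (∀ (u v : V) (hu : u ∈ T) (hv : v ∈ T) (h : u ≠ v)
    (u' v' : V) (hu' : u' ∈ T) (hv' : v' ∈ T) (h' : u' ≠ v'), s(u, v) ≠ s(u', v') →
    ∀ w ∈ (P u v hu hv h).support, w ≠ u → w ≠ v →
      w ∈ (P u' v' hu' hv' h').support → w = u' ∨ w = v')

/-- `G` contains a `K_k`-subdivision. -/
def HasKSubdivision {V : Type*} (G : SimpleGraph V) (k : ℕ) : Prop :=
  ∃ T : Finset V, T.card = k ∧ ∃ P, IsSubdivisionFamily G T P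


open SimpleGraph Finset

lemma exists_middles {V : Type*} [Fintype V] [DecidableEq V]
    (G : SimpleGraph V) [DecidableRel G.Adj] (n t : ℕ)
    (hn : Fintype.card V = n) (T : Finset V) (hT : T.card = t)
    (hdeg : ∀ v ∈ T, 2 * Gᶜ.degree v + t < n + 2)
    (s : Finset (Sym2 V))
    (hs : s ⊆ ((T ×ˢ T).filter (fun p => p.1 ≠ p.2 ∧ ¬ G.Adj p.1 p.2)).image
      (fun p => s(p.1, p.2))) :
    ∃ g : Sym2 V → V, ∀ e ∈ s,
      (g e ∉ T ∧ ∀ a b : V, s(a, b) = e → a ∈ T → b ∈ T → a ≠ b → G.Adj a (g e)) ∧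
      ∀ e' ∈ s, e ≠ e' → ∀ x, x ∈ e → x ∈ e' → g e ≠ g e' := by
  classical
  set M := ((T ×ˢ T).filter (fun p => p.1 ≠ p.2 ∧ ¬ G.Adj p.1 p.2)).image
      (fun p => s(p.1, p.2)) with hM
  -- membership characterization of M
  have hMmem : ∀ e ∈ M, ∃ a b : V, e = s(a,b) ∧ a ∈ T ∧ b ∈ T ∧ a ≠ b ∧ ¬ G.Adj a b := by
    intro e he
    obtain ⟨p, hp, hpe⟩ := Finset.mem_image.1 he
    obtain ⟨hp1, hp2, hp3⟩ := Finset.mem_filter.1 hp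
    exact ⟨p.1, p.2, hpe.symm, (Finset.mem_product.1 hp1).1, (Finset.mem_product.1 hp1).2,
      hp2, hp3⟩
  clear_value M
  clear hM
  induction s using Finset.induction_on with
  | empty => exact ⟨fun e => e.out.1, by simp⟩
  | @insert a s ha ih =>
    obtain ⟨g, hg⟩ := ih ((Finset.subset_insert a s).trans hs)
    obtain ⟨u, v, hauv, hu, hv, huv, hnadj⟩ := hMmem a (hs (Finset.mem_insert_self a s))
    -- candidate middles
    set C : Finset V := Finset.univ.filter (fun w => w ∉ T ∧ G.Adj u w ∧ G.Adj v w) with hC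
    set F : Finset V := (s.filter (fun e' => u ∈ e' ∨ v ∈ e')).image g with hF
    -- key counting bound per endpoint
    have key : ∀ x y : V, x ∈ T → y ∈ T → x ≠ y → ¬ G.Adj x y → a = s(x,y) →
        (s.filter (fun e' => x ∈ e')).card ≤ ((Gᶜ.neighborFinset x ∩ T).erase y).card := by
      intro x y hx hy hxy hnxy haxy
      apply Finset.card_le_card_of_injOn (fun e' => if h : x ∈ e' then Sym2.Mem.other' h else x)
      · intro e' he'
        have he's := (Finset.mem_filter.1 he').1
        have hxe' : x ∈ e' := (Finset.mem_filter.1 he').2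
        simp only [dif_pos hxe']
        obtain ⟨p, q, hepq, hp, hq, hpq, hna⟩ := hMmem e' (hs (Finset.mem_insert_of_mem he's))
        have hspec : s(x, Sym2.Mem.other' hxe') = e' := Sym2.other_spec' hxe'
        have hcases : (x = p ∧ Sym2.Mem.other' hxe' = q) ∨
            (x = q ∧ Sym2.Mem.other' hxe' = p) := by
          exact Sym2.eq_iff.1 (hspec.trans hepq)
        have hoT : Sym2.Mem.other' hxe' ∈ T := by
          rcases hcases with ⟨_, h2⟩ | ⟨_, h2⟩
          · exact h2 ▸ hq
          · exact h2 ▸ hp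
        have hona : ¬ G.Adj x (Sym2.Mem.other' hxe') := by
          rcases hcases with ⟨h1, h2⟩ | ⟨h1, h2⟩
          · subst h1; subst h2; exact hna
          · subst h1; subst h2; exact fun h => hna h.symm
        have hone : Sym2.Mem.other' hxe' ≠ x := by
          rcases hcases with ⟨h1, h2⟩ | ⟨h1, h2⟩
          · subst h1; subst h2; exact fun h => hpq h.symm
          · subst h1; subst h2; exact hpq
        have honey : Sym2.Mem.other' hxe' ≠ y := by
          intro hh
          apply ha
          have : e' = a := by rw [← hspec, hh, haxy]
          exact this ▸ he's
        refine Finset.mem_erase.2 ⟨honey, Finset.mem_inter.2 ⟨?_, hoT⟩⟩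
        rw [mem_neighborFinset, compl_adj]
        exact ⟨fun h => hone h.symm, hona⟩
      · intro e1 he1 e2 he2 heq
        have h1 : x ∈ e1 := (Finset.mem_filter.1 (Finset.mem_coe.1 he1)).2
        have h2 : x ∈ e2 := (Finset.mem_filter.1 (Finset.mem_coe.1 he2)).2
        simp only [dif_pos h1, dif_pos h2] at heq
        rw [← Sym2.other_spec' h1, ← Sym2.other_spec' h2, heq]
    have hvmem : v ∈ Gᶜ.neighborFinset u ∩ T := by
      rw [Finset.mem_inter, mem_neighborFinset, compl_adj]
      exact ⟨⟨huv, hnadj⟩, hv⟩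
    have humem : u ∈ Gᶜ.neighborFinset v ∩ T := by
      rw [Finset.mem_inter, mem_neighborFinset, compl_adj]
      exact ⟨⟨huv.symm, fun h => hnadj h.symm⟩, hu⟩
    -- cardinality of F
    have hFcard : F.card < C.card := by
      have h1 : F.card ≤ (s.filter (fun e' => u ∈ e')).card +
          (s.filter (fun e' => v ∈ e')).card := by
        calc F.card ≤ (s.filter (fun e' => u ∈ e' ∨ v ∈ e')).card := Finset.card_image_le
        _ ≤ _ := by rw [Finset.filter_or]; exact Finset.card_union_le _ _
      have h2 := key u v hu hv huv hnadj hauv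
      have h3 := key v u hv hu huv.symm (fun h => hnadj h.symm) (hauv.trans (Sym2.eq_swap))
      have h4 : ((Gᶜ.neighborFinset u ∩ T).erase v).card
          = (Gᶜ.neighborFinset u ∩ T).card - 1 := Finset.card_erase_of_mem hvmem
      have h5 : ((Gᶜ.neighborFinset v ∩ T).erase u).card
          = (Gᶜ.neighborFinset v ∩ T).card - 1 := Finset.card_erase_of_mem humem
      have h6 : 1 ≤ (Gᶜ.neighborFinset u ∩ T).card := Finset.card_pos.2 ⟨v, hvmem⟩
      have h7 : 1 ≤ (Gᶜ.neighborFinset v ∩ T).card := Finset.card_pos.2 ⟨u, humem⟩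
      -- lower bound on C
      have hsub : Finset.univ \ T ⊆ C ∪ (Gᶜ.neighborFinset u \ T) ∪ (Gᶜ.neighborFinset v \ T) := by
        intro w hw
        have hwT : w ∉ T := (Finset.mem_sdiff.1 hw).2
        by_cases hadju : G.Adj u w
        · by_cases hadjv : G.Adj v w
          · exact Finset.mem_union_left _ (Finset.mem_union_left _
              (Finset.mem_filter.2 ⟨Finset.mem_univ _, hwT, hadju, hadjv⟩))
          · refine Finset.mem_union_right _ (Finset.mem_sdiff.2 ⟨?_, hwT⟩)
            rw [mem_neighborFinset, compl_adj]
            exact ⟨fun h => hwT (h ▸ hv), hadjv⟩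
        · refine Finset.mem_union_left _ (Finset.mem_union_right _ (Finset.mem_sdiff.2 ⟨?_, hwT⟩))
          rw [mem_neighborFinset, compl_adj]
          exact ⟨fun h => hwT (h ▸ hu), hadju⟩
      have h8 : (Finset.univ \ T).card ≤ C.card + (Gᶜ.neighborFinset u \ T).card
          + (Gᶜ.neighborFinset v \ T).card :=
        (Finset.card_le_card hsub).trans ((Finset.card_union_le _ _).trans
          (by gcongr; exact Finset.card_union_le _ _))
      have h9 : (Finset.univ \ T).card = n - t := by
        rw [Finset.card_sdiff_of_subset (Finset.subset_univ T), Finset.card_univ, hn, hT]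
      have h10 : t ≤ n := by
        rw [← hn, ← hT, ← Finset.card_univ]; exact Finset.card_le_card (Finset.subset_univ T)
      have h11 : (Gᶜ.neighborFinset u ∩ T).card + (Gᶜ.neighborFinset u \ T).card
          = Gᶜ.degree u := by rw [Finset.card_inter_add_card_sdiff]; rfl
      have h12 : (Gᶜ.neighborFinset v ∩ T).card + (Gᶜ.neighborFinset v \ T).card
          = Gᶜ.degree v := by rw [Finset.card_inter_add_card_sdiff]; rfl
      have h13 := hdeg u hu
      have h14 := hdeg v hv
      omega
    have hCF : ¬ C ⊆ F := fun h => absurd (Finset.card_le_card h) (by omega)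
    obtain ⟨w, hwC, hwF⟩ := Finset.not_subset.1 hCF
    have hwprop := Finset.mem_filter.1 hwC
    refine ⟨Function.update g a w, ?_⟩
    intro e he
    rcases Finset.mem_insert.1 he with rfl | hes
    · constructor
      · rw [Function.update_self]
        refine ⟨hwprop.2.1, ?_⟩
        intro a' b' hab' ha' hb' hab
        rw [hauv] at hab'
        rcases Sym2.eq_iff.1 hab' with ⟨rfl, rfl⟩ | ⟨rfl, rfl⟩
        · exact hwprop.2.2.1
        · exact hwprop.2.2.2
      · intro e' he' hne x hxe hxe'
        have he's : e' ∈ s := by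
          rcases Finset.mem_insert.1 he' with rfl | h
          · exact absurd rfl hne
          · exact h
        rw [Function.update_self, Function.update_of_ne (Ne.symm hne) _ _]
        · intro hcontra
          apply hwF
          rw [hF]
          refine Finset.mem_image.2 ⟨e', Finset.mem_filter.2 ⟨he's, ?_⟩, hcontra.symm⟩
          rw [hauv] at hxe
          rcases Sym2.mem_iff.1 hxe with rfl | rfl
          · exact Or.inl hxe'
          · exact Or.inr hxe'
    · have hea : e ≠ a := fun h => ha (by rwa [h] at hes)
      rw [Function.update_of_ne hea _ _]
      constructor
      · exact (hg e hes).1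
      · intro e' he' hne x hxe hxe'
        rcases Finset.mem_insert.1 he' with rfl | he's
        · rw [Function.update_self]
          intro hcontra
          apply hwF
          rw [hF]
          refine Finset.mem_image.2 ⟨e, Finset.mem_filter.2 ⟨hes, ?_⟩, hcontra⟩
          rw [hauv] at hxe'
          rcases Sym2.mem_iff.1 hxe' with rfl | rfl
          · exact Or.inl hxe
          · exact Or.inr hxe
        · rw [Function.update_of_ne (fun h => ha (by rwa [h] at he's)) _ _]
          exact (hg e hes).2 e' he's hne x hxe hxe'


theorem immersion_with_prescribed_ends {V : Type*} [Fintype V] [DecidableEq V]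
    (G : SimpleGraph V) [DecidableRel G.Adj] (n t : ℕ)
    (hn : Fintype.card V = n) (T : Finset V) (hT : T.card = t)
    (hdeg : ∀ v ∈ T, 2 * Gᶜ.degree v + t < n + 2) :
    ∃ P : ∀ u v : V, u ∈ T → v ∈ T → u ≠ v → G.Walk u v,
      IsStrongImmersionFamily G T P ∧
      ∀ (u v : V) (hu : u ∈ T) (hv : v ∈ T) (h : u ≠ v), ¬ G.Adj u v →
        (P u v hu hv h).length = 2 ∧
        ∀ w ∈ (P u v hu hv h).support, w ≠ u → w ≠ v → w ∉ T := by
  classical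
  obtain ⟨g, hg⟩ := exists_middles G n t hn T hT hdeg
    (((T ×ˢ T).filter (fun p => p.1 ≠ p.2 ∧ ¬ G.Adj p.1 p.2)).image (fun p => s(p.1, p.2)))
    subset_rfl
  have hmem : ∀ u v : V, u ∈ T → v ∈ T → u ≠ v → ¬ G.Adj u v →
      s(u, v) ∈ ((T ×ˢ T).filter (fun p => p.1 ≠ p.2 ∧ ¬ G.Adj p.1 p.2)).image
        (fun p => s(p.1, p.2)) := by
    intro u v hu hv h hna
    exact Finset.mem_image.2 ⟨(u, v),
      Finset.mem_filter.2 ⟨Finset.mem_product.2 ⟨hu, hv⟩, h, hna⟩, rfl⟩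
  have H1 : ∀ u v (hu : u ∈ T) (hv : v ∈ T) (h : u ≠ v), ¬ G.Adj u v →
      G.Adj u (g s(u, v)) :=
    fun u v hu hv h hna => (hg _ (hmem u v hu hv h hna)).1.2 u v rfl hu hv h
  have H2 : ∀ u v (hu : u ∈ T) (hv : v ∈ T) (h : u ≠ v), ¬ G.Adj u v →
      G.Adj (g s(u, v)) v :=
    fun u v hu hv h hna =>
      ((hg _ (hmem u v hu hv h hna)).1.2 v u Sym2.eq_swap hv hu h.symm).symm
  have HT : ∀ u v (hu : u ∈ T) (hv : v ∈ T) (h : u ≠ v), ¬ G.Adj u v → g s(u, v) ∉ T :=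
    fun u v hu hv h hna => (hg _ (hmem u v hu hv h hna)).1.1
  refine ⟨fun u v hu hv h =>
    if hadj : G.Adj u v then Walk.cons hadj Walk.nil
    else Walk.cons (H1 u v hu hv h hadj) (Walk.cons (H2 u v hu hv h hadj) Walk.nil),
    ⟨?_, ?_, ?_⟩, ?_⟩
  · -- IsPath
    intro u v hu hv h
    by_cases hadj : G.Adj u v
    · simp only [dif_pos hadj]
      simp [Walk.isPath_def, h]
    · simp only [dif_neg hadj]
      have h1 : u ≠ g s(u, v) := fun hh => HT u v hu hv h hadj (by rw [← hh]; exact hu)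
      have h2 : g s(u, v) ≠ v := fun hh => HT u v hu hv h hadj (by rw [hh]; exact hv)
      simp [Walk.isPath_def, h, h1, h2]
  · -- internal vertices
    intro u v hu hv h w hw hwT
    by_cases hadj : G.Adj u v
    · simp only [dif_pos hadj, Walk.support_cons, Walk.support_nil] at hw
      simpa using hw
    · simp only [dif_neg hadj, Walk.support_cons, Walk.support_nil] at hw
      simp only [List.mem_cons, List.mem_singleton, List.not_mem_nil, or_false] at hw
      rcases hw with rfl | rfl | rfl
      · exact Or.inl rfl
      · exact absurd hwT (HT u v hu hv h hadj)
      · exact Or.inr rfl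
  · -- edge-disjointness
    intro u v hu hv h u' v' hu' hv' h' hne e he
    by_cases hadj : G.Adj u v <;> by_cases hadj' : G.Adj u' v'
    · simp only [dif_pos hadj] at he
      simp only [dif_pos hadj']
      simp only [Walk.edges_cons, Walk.edges_nil, List.mem_singleton] at he
      simp only [Walk.edges_cons, Walk.edges_nil, List.mem_singleton]
      rw [he]; exact hne
    · simp only [dif_pos hadj] at he
      simp only [dif_neg hadj']
      simp only [Walk.edges_cons, Walk.edges_nil, List.mem_singleton] at he
      simp only [Walk.edges_cons, Walk.edges_nil, List.mem_cons, List.mem_singleton,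
        List.not_mem_nil, or_false]
      rw [he]
      have hT2 := HT u' v' hu' hv' h' hadj'
      rintro (hh | hh)
      · rcases Sym2.eq_iff.1 hh with ⟨h1, h2⟩ | ⟨h1, h2⟩
        · exact hT2 (by rw [← h2]; exact hv)
        · exact hT2 (by rw [← h1]; exact hu)
      · rcases Sym2.eq_iff.1 hh with ⟨h1, h2⟩ | ⟨h1, h2⟩
        · exact hT2 (by rw [← h1]; exact hu)
        · exact hT2 (by rw [← h2]; exact hv)
    · simp only [dif_neg hadj] at he
      simp only [dif_pos hadj']
      simp only [Walk.edges_cons, Walk.edges_nil, List.mem_cons, List.mem_singleton,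
        List.not_mem_nil, or_false] at he
      simp only [Walk.edges_cons, Walk.edges_nil, List.mem_singleton]
      have hT1 := HT u v hu hv h hadj
      rcases he with rfl | rfl
      · intro hh
        rcases Sym2.eq_iff.1 hh with ⟨h1, h2⟩ | ⟨h1, h2⟩
        · exact hT1 (by rw [h2]; exact hv')
        · exact hT1 (by rw [h2]; exact hu')
      · intro hh
        rcases Sym2.eq_iff.1 hh with ⟨h1, h2⟩ | ⟨h1, h2⟩
        · exact hT1 (by rw [h1]; exact hu')
        · exact hT1 (by rw [h1]; exact hv')
    · simp only [dif_neg hadj] at he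
      simp only [dif_neg hadj']
      have hdj : ∀ x, x ∈ s(u, v) → x ∈ s(u', v') → g s(u, v) ≠ g s(u', v') :=
        (hg _ (hmem u v hu hv h hadj)).2 _ (hmem u' v' hu' hv' h' hadj') hne
      simp only [Walk.edges_cons, Walk.edges_nil, List.mem_cons, List.mem_singleton,
        List.not_mem_nil, or_false] at he
      simp only [Walk.edges_cons, Walk.edges_nil, List.mem_cons, List.mem_singleton,
        List.not_mem_nil, or_false]
      have hT1 := HT u v hu hv h hadj
      have hT2 := HT u' v' hu' hv' h' hadj'
      rcases he with rfl | rfl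
      · rintro (hh | hh)
        · rcases Sym2.eq_iff.1 hh with ⟨h1, h2⟩ | ⟨h1, h2⟩
          · exact hdj u (Sym2.mem_mk_left u v)
              (by rw [h1]; exact Sym2.mem_mk_left u' v') h2
          · exact hT2 (by rw [← h1]; exact hu)
        · rcases Sym2.eq_iff.1 hh with ⟨h1, h2⟩ | ⟨h1, h2⟩
          · exact hT2 (by rw [← h1]; exact hu)
          · exact hdj u (Sym2.mem_mk_left u v)
              (by rw [h1]; exact Sym2.mem_mk_right u' v') h2
      · rintro (hh | hh)
        · rcases Sym2.eq_iff.1 hh with ⟨h1, h2⟩ | ⟨h1, h2⟩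
          · exact hT2 (by rw [← h2]; exact hv)
          · exact hdj v (Sym2.mem_mk_right u v)
              (by rw [h2]; exact Sym2.mem_mk_left u' v') h1
        · rcases Sym2.eq_iff.1 hh with ⟨h1, h2⟩ | ⟨h1, h2⟩
          · exact hdj v (Sym2.mem_mk_right u v)
              (by rw [h2]; exact Sym2.mem_mk_right u' v') h1
          · exact hT2 (by rw [← h2]; exact hv)
  · -- length two and internal vertex outside T
    intro u v hu hv h hna
    simp only [dif_neg hna]
    constructor
    · simp
    · intro w hw hwu hwv
      simp only [Walk.support_cons, Walk.support_nil, List.mem_cons, List.mem_singleton,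
        List.not_mem_nil, or_false] at hw
      rcases hw with rfl | rfl | rfl
      · exact absurd rfl hwu
      · exact HT u v hu hv h hna
      · exact absurd rfl hwv
end

section
/- If G is a graph on n vertices in which every vertex has fewer than (n-t+2)/2 non-neighbors, then G contains a strong immersion of K_t. -/
open SimpleGraph

open Finset in
lemma greedy_coloring {V : Type*} [Fintype V] [DecidableEq V] [Nonempty V]
    (G : SimpleGraph V) [DecidableRel G.Adj] (n t : ℕ)
    (hn : Fintype.card V = n)
    (hdeg : ∀ v : V, 2 * Gᶜ.degree v + t < n + 2)
    (T : Finset V) (hT : T.card = t) :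
    ∀ F : Finset (Sym2 V),
      (∀ e ∈ F, ∃ u v : V, e = s(u, v) ∧ u ∈ T ∧ v ∈ T ∧ u ≠ v ∧ ¬ G.Adj u v) →
      ∃ c : Sym2 V → V,
        (∀ e ∈ F, c e ∉ T ∧ ∀ x ∈ e, G.Adj x (c e)) ∧
        (∀ e ∈ F, ∀ e' ∈ F, e ≠ e' → ∀ x, x ∈ e → x ∈ e' → c e ≠ c e') := by
  classical
  intro F
  induction F using Finset.strongInduction with
  | _ F ih =>
    intro hF
    rcases F.eq_empty_or_nonempty with rfl | ⟨e₀, he₀⟩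
    · exact ⟨fun _ => Classical.arbitrary V, by simp, by simp⟩
    obtain ⟨u, v, rfl, hu, hv, huv, hadj⟩ := hF e₀ he₀
    obtain ⟨c, hc1, hc2⟩ := ih (F.erase s(u, v)) (F.erase_ssubset he₀)
      (fun e' he' => hF e' (F.erase_subset _ he'))
    -- the forbidden set of colors
    set forb : Finset V :=
      ((Gᶜ.neighborFinset u \ T) ∪ (Gᶜ.neighborFinset v \ T)) ∪
        ((((F.erase s(u, v)).filter (fun e' => u ∈ e')).image c) ∪
          (((F.erase s(u, v)).filter (fun e' => v ∈ e')).image c))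
      with hforb
    -- key cardinality bound for one endpoint
    have key : ∀ a b : V, a ∈ T → b ∈ T → a ≠ b → ¬ G.Adj a b → s(a, b) = s(u, v) →
        (Gᶜ.neighborFinset a \ T).card
          + (((F.erase s(u, v)).filter (fun e' => a ∈ e')).image c).card + 1
          ≤ Gᶜ.degree a := by
      intro a b ha hb hab hnadj hab'
      have hbmem : b ∈ Gᶜ.neighborFinset a ∩ T := by
        simp [mem_neighborFinset, compl_adj, hab, hnadj, hb]
      have hfilt : ((F.erase s(u, v)).filter (fun e' => a ∈ e')).card
          ≤ ((Gᶜ.neighborFinset a ∩ T).erase b).card := by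
        apply Finset.card_le_card_of_injOn
          (fun e' => if h : a ∈ e' then Sym2.Mem.other' h else a)
        · intro e' he'
          rw [mem_coe, mem_filter] at he'; simp only [mem_coe]
          obtain ⟨he'1, he'2⟩ := he'
          rw [dif_pos he'2]
          set w := Sym2.Mem.other' he'2 with hw
          have hspec : s(a, w) = e' := Sym2.other_spec' he'2
          obtain ⟨x, y, hxy, hx, hy, hxyne, hxyadj⟩ := hF e' (F.erase_subset _ he'1)
          rw [hxy] at hspec
          rw [Sym2.eq_iff] at hspec
          have hwT : w ∈ T ∧ ¬ G.Adj a w ∧ a ≠ w := by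
            rcases hspec with ⟨rfl, rfl⟩ | ⟨rfl, rfl⟩
            · exact ⟨hy, hxyadj, hxyne⟩
            · exact ⟨hx, fun hh => hxyadj hh.symm, fun hh => hxyne hh.symm⟩
          have hwb : w ≠ b := by
            rintro rfl
            exact (Finset.mem_erase.mp he'1).1 (by rw [← hab', ← Sym2.other_spec' he'2])
          rw [Finset.mem_erase, Finset.mem_inter, mem_neighborFinset, compl_adj]
          exact ⟨hwb, ⟨hwT.2.2, hwT.2.1⟩, hwT.1⟩
        · intro e1 he1 e2 he2 heq
          rw [mem_coe, mem_filter] at he1 he2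
          simp only at heq
          rw [dif_pos he1.2, dif_pos he2.2] at heq
          rw [← Sym2.other_spec' he1.2, ← Sym2.other_spec' he2.2, heq]
      have hcardsum : (Gᶜ.neighborFinset a \ T).card + (Gᶜ.neighborFinset a ∩ T).card
          = Gᶜ.degree a := Finset.card_sdiff_add_card_inter _ _
      have herase : ((Gᶜ.neighborFinset a ∩ T).erase b).card
          = (Gᶜ.neighborFinset a ∩ T).card - 1 := Finset.card_erase_of_mem hbmem
      have hpos : 1 ≤ (Gᶜ.neighborFinset a ∩ T).card := Finset.card_pos.mpr ⟨b, hbmem⟩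
      have himg := Finset.card_image_le (s := (F.erase s(u, v)).filter (fun e' => a ∈ e')) (f := c)
      omega
    have keyu := key u v hu hv huv hadj rfl
    have keyv := key v u hv hu (Ne.symm huv) (fun hh => hadj hh.symm) (Sym2.eq_swap)
    have hforbcard : forb.card < Tᶜ.card := by
      have h1 : forb.card ≤ (Gᶜ.neighborFinset u \ T).card + (Gᶜ.neighborFinset v \ T).card
          + (((((F.erase s(u, v)).filter (fun e' => u ∈ e')).image c)).card
            + ((((F.erase s(u, v)).filter (fun e' => v ∈ e')).image c)).card) := by
        calc forb.card ≤ ((Gᶜ.neighborFinset u \ T) ∪ (Gᶜ.neighborFinset v \ T)).card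
              + (((((F.erase s(u, v)).filter (fun e' => u ∈ e')).image c)) ∪
                  ((((F.erase s(u, v)).filter (fun e' => v ∈ e')).image c))).card :=
            Finset.card_union_le _ _
          _ ≤ _ := by
              have h2 := Finset.card_union_le (Gᶜ.neighborFinset u \ T) (Gᶜ.neighborFinset v \ T)
              have h3 := Finset.card_union_le ((((F.erase s(u, v)).filter (fun e' => u ∈ e')).image c))
                ((((F.erase s(u, v)).filter (fun e' => v ∈ e')).image c))
              omega
      have hTc : Tᶜ.card + t = n := by
        have := Finset.card_compl T
        have hle : T.card ≤ Fintype.card V := Finset.card_le_univ T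
        omega
      have hdu := hdeg u
      have hdv := hdeg v
      omega
    obtain ⟨w, hwc, hwf⟩ : ∃ w, w ∈ Tᶜ ∧ w ∉ forb := by
      by_contra hcon
      push_neg at hcon
      have : Tᶜ ⊆ forb := fun x hx => hcon x hx
      have := Finset.card_le_card this
      omega
    have hwT : w ∉ T := Finset.mem_compl.mp hwc
    refine ⟨Function.update c s(u, v) w, ?_, ?_⟩
    · intro e he
      rcases eq_or_ne e s(u, v) with rfl | hne
      · rw [Function.update_self]
        refine ⟨hwT, ?_⟩
        intro x hx
        have hxT : x ∈ T := by
          rw [Sym2.mem_iff] at hx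
          rcases hx with rfl | rfl <;> assumption
        have hxw : ¬ Gᶜ.Adj x w := by
          intro hcadj
          apply hwf
          rw [hforb]
          have : w ∈ Gᶜ.neighborFinset x \ T := by
            rw [Finset.mem_sdiff, mem_neighborFinset]; exact ⟨hcadj, hwT⟩
          rw [Sym2.mem_iff] at hx
          rcases hx with rfl | rfl
          · exact Finset.mem_union_left _ (Finset.mem_union_left _ this)
          · exact Finset.mem_union_left _ (Finset.mem_union_right _ this)
        rw [compl_adj] at hxw
        push_neg at hxw
        exact hxw (fun hh => hwT (hh ▸ hxT))
      · rw [Function.update_of_ne hne]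
        exact hc1 e (Finset.mem_erase.mpr ⟨hne, he⟩)
    · intro e he e' he' hnee x hx hx'
      rcases eq_or_ne e s(u, v) with rfl | hne
      · rcases eq_or_ne e' s(u, v) with rfl | hne'
        · exact absurd rfl hnee
        · rw [Function.update_self, Function.update_of_ne hne']
          intro hcc
          apply hwf
          rw [hforb]
          have he'm : e' ∈ F.erase s(u, v) := Finset.mem_erase.mpr ⟨hne', he'⟩
          rw [Sym2.mem_iff] at hx
          rcases hx with rfl | rfl
          · exact Finset.mem_union_right _ (Finset.mem_union_left _
              (hcc ▸ Finset.mem_image_of_mem c (Finset.mem_filter.mpr ⟨he'm, hx'⟩)))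
          · exact Finset.mem_union_right _ (Finset.mem_union_right _
              (hcc ▸ Finset.mem_image_of_mem c (Finset.mem_filter.mpr ⟨he'm, hx'⟩)))
      · rcases eq_or_ne e' s(u, v) with rfl | hne'
        · rw [Function.update_self, Function.update_of_ne hne]
          intro hcc
          apply hwf
          rw [hforb]
          have hem : e ∈ F.erase s(u, v) := Finset.mem_erase.mpr ⟨hne, he⟩
          rw [Sym2.mem_iff] at hx'
          rcases hx' with rfl | rfl
          · exact Finset.mem_union_right _ (Finset.mem_union_left _
              (hcc ▸ Finset.mem_image_of_mem c (Finset.mem_filter.mpr ⟨hem, hx⟩)))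
          · exact Finset.mem_union_right _ (Finset.mem_union_right _
              (hcc ▸ Finset.mem_image_of_mem c (Finset.mem_filter.mpr ⟨hem, hx⟩)))
        · rw [Function.update_of_ne hne, Function.update_of_ne hne']
          exact hc2 e (Finset.mem_erase.mpr ⟨hne, he⟩) e' (Finset.mem_erase.mpr ⟨hne', he'⟩)
            hnee x hx hx'

open Finset in
theorem immersion_of_small_missing_degree {V : Type*} [Fintype V] [DecidableEq V]
    (G : SimpleGraph V) [DecidableRel G.Adj] (n t : ℕ)
    (hn : Fintype.card V = n) (ht : t ≤ n)
    (hdeg : ∀ v : V, 2 * Gᶜ.degree v + t < n + 2) :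
    ∃ T : Finset V, T.card = t ∧
      ∃ P : ∀ u v : V, u ∈ T → v ∈ T → u ≠ v → G.Walk u v,
        IsStrongImmersionFamily G T P := by
  classical
  cases isEmpty_or_nonempty V with
  | inl hemp =>
    have hn0 : n = 0 := by rw [← hn]; exact Fintype.card_eq_zero
    refine ⟨∅, by simp; omega, fun u v hu hv h => absurd hu (Finset.notMem_empty u), ?_, ?_, ?_⟩
    · intro u v hu; exact absurd hu (Finset.notMem_empty u)
    · intro u v hu; exact absurd hu (Finset.notMem_empty u)
    · intro u v hu; exact absurd hu (Finset.notMem_empty u)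
  | inr hne =>
    obtain ⟨T, -, hT⟩ := Finset.exists_subset_card_eq (s := (Finset.univ : Finset V)) (n := t)
      (by rw [Finset.card_univ, hn]; exact ht)
    -- the set of missing pairs
    set F : Finset (Sym2 V) :=
      ((T ×ˢ T).filter (fun p => p.1 ≠ p.2 ∧ ¬ G.Adj p.1 p.2)).image (fun p => s(p.1, p.2))
      with hFdef
    have hFspec : ∀ e ∈ F, ∃ u v : V, e = s(u, v) ∧ u ∈ T ∧ v ∈ T ∧ u ≠ v ∧ ¬ G.Adj u v := by
      intro e he
      rw [hFdef, Finset.mem_image] at he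
      obtain ⟨p, hp, rfl⟩ := he
      rw [Finset.mem_filter, Finset.mem_product] at hp
      exact ⟨p.1, p.2, rfl, hp.1.1, hp.1.2, hp.2.1, hp.2.2⟩
    have hFmem : ∀ u v : V, u ∈ T → v ∈ T → u ≠ v → ¬ G.Adj u v → s(u, v) ∈ F := by
      intro u v hu hv h hna
      rw [hFdef, Finset.mem_image]
      exact ⟨(u, v), Finset.mem_filter.mpr ⟨Finset.mem_product.mpr ⟨hu, hv⟩, h, hna⟩, rfl⟩
    obtain ⟨c, hc1, hc2⟩ := greedy_coloring G n t hn hdeg T hT F hFspec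
    have hmidT : ∀ u v : V, u ∈ T → v ∈ T → u ≠ v → ¬ G.Adj u v → c s(u, v) ∉ T :=
      fun u v hu hv h hna => (hc1 _ (hFmem u v hu hv h hna)).1
    have hadj1 : ∀ u v : V, u ∈ T → v ∈ T → u ≠ v → ¬ G.Adj u v → G.Adj u (c s(u, v)) :=
      fun u v hu hv h hna => (hc1 _ (hFmem u v hu hv h hna)).2 u (Sym2.mem_mk_left u v)
    have hadj2 : ∀ u v : V, u ∈ T → v ∈ T → u ≠ v → ¬ G.Adj u v → G.Adj (c s(u, v)) v :=
      fun u v hu hv h hna => ((hc1 _ (hFmem u v hu hv h hna)).2 v (Sym2.mem_mk_right u v)).symm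
    refine ⟨T, hT, fun u v hu hv h =>
      if h' : G.Adj u v then Walk.cons h' Walk.nil
      else Walk.cons (hadj1 u v hu hv h h') (Walk.cons (hadj2 u v hu hv h h') Walk.nil),
      ?_, ?_, ?_⟩
    · -- paths
      intro u v hu hv h
      dsimp only
      by_cases h' : G.Adj u v
      · rw [dif_pos h']
        simp [Walk.isPath_def, h]
      · rw [dif_neg h']
        have h1 : u ≠ c s(u, v) := fun hh => hmidT u v hu hv h h' (hh ▸ hu)
        have h2 : v ≠ c s(u, v) := fun hh => hmidT u v hu hv h h' (hh ▸ hv)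
        simp [Walk.isPath_def, h, h1, h1.symm, h2, h2.symm]
    · -- internal vertices avoid T
      intro u v hu hv h w hw hwT
      dsimp only at hw
      by_cases h' : G.Adj u v
      · rw [dif_pos h'] at hw
        simpa using hw
      · rw [dif_neg h'] at hw
        simp [Walk.support_cons] at hw
        rcases hw with rfl | rfl | rfl
        · exact Or.inl rfl
        · exact absurd hwT (hmidT u v hu hv h h')
        · exact Or.inr rfl
    · -- edge-disjointness
      intro u v hu hv h u' v' hu' hv' h' hne12 e he
      dsimp only at he ⊢
      -- helper: an edge with one endpoint in T and one not
      have keymid : ∀ a b x y : V, a ∈ T → x ∈ T → b ∉ T → y ∉ T → s(a, b) = s(x, y) →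
          a = x ∧ b = y := by
        intro a b x y ha hx hb hy heq
        rw [Sym2.eq_iff] at heq
        rcases heq with ⟨rfl, rfl⟩ | ⟨rfl, rfl⟩
        · exact ⟨rfl, rfl⟩
        · exact absurd ha hy
      by_cases hA : G.Adj u v <;> by_cases hB : G.Adj u' v'
      · rw [dif_pos hA] at he; rw [dif_pos hB]
        simp only [Walk.edges_cons, Walk.edges_nil, List.mem_cons, List.not_mem_nil, or_false,
          List.mem_singleton] at he ⊢
        rw [he]; exact hne12
      · rw [dif_pos hA] at he; rw [dif_neg hB]
        simp only [Walk.edges_cons, Walk.edges_nil, List.mem_cons, List.not_mem_nil, or_false,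
          List.mem_singleton] at he ⊢
        subst he
        push_neg
        constructor
        · intro hh
          have : c s(u', v') ∈ s(u, v) := hh ▸ Sym2.mem_mk_right u' (c s(u', v'))
          rw [Sym2.mem_iff] at this
          rcases this with rfl | rfl
          · exact hmidT u' v' hu' hv' h' hB hu
          · exact hmidT u' v' hu' hv' h' hB hv
        · intro hh
          have : c s(u', v') ∈ s(u, v) := hh ▸ Sym2.mem_mk_left (c s(u', v')) v'
          rw [Sym2.mem_iff] at this
          rcases this with rfl | rfl
          · exact hmidT u' v' hu' hv' h' hB hu
          · exact hmidT u' v' hu' hv' h' hB hv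
      · rw [dif_neg hA] at he; rw [dif_pos hB]
        simp only [Walk.edges_cons, Walk.edges_nil, List.mem_cons, List.not_mem_nil, or_false,
          List.mem_singleton] at he ⊢
        intro hh
        rcases he with rfl | rfl
        · have : c s(u, v) ∈ s(u', v') := hh ▸ Sym2.mem_mk_right u (c s(u, v))
          rw [Sym2.mem_iff] at this
          rcases this with heq | heq
          · exact hmidT u v hu hv h hA (heq ▸ hu')
          · exact hmidT u v hu hv h hA (heq ▸ hv')
        · have : c s(u, v) ∈ s(u', v') := hh ▸ Sym2.mem_mk_left (c s(u, v)) v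
          rw [Sym2.mem_iff] at this
          rcases this with heq | heq
          · exact hmidT u v hu hv h hA (heq ▸ hu')
          · exact hmidT u v hu hv h hA (heq ▸ hv')
      · rw [dif_neg hA] at he; rw [dif_neg hB]
        simp only [Walk.edges_cons, Walk.edges_nil, List.mem_cons, List.not_mem_nil, or_false,
          List.mem_singleton] at he ⊢
        have hmT := hmidT u v hu hv h hA
        have hmT' := hmidT u' v' hu' hv' h' hB
        have hcneq : c s(u, v) ≠ c s(u', v') → True := fun _ => trivial
        -- shared-vertex injectivity
        have hinj : ∀ x : V, x ∈ s(u, v) → x ∈ s(u', v') → c s(u, v) ≠ c s(u', v') :=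
          fun x hx hx' => hc2 _ (hFmem u v hu hv h hA) _ (hFmem u' v' hu' hv' h' hB) hne12 x hx hx'
        push_neg
        rcases he with rfl | rfl
        · constructor
          · intro hh
            obtain ⟨rfl, hcm⟩ := keymid u (c s(u, v)) u' (c s(u', v')) hu hu' hmT hmT' hh
            exact hinj u (Sym2.mem_mk_left _ _) (Sym2.mem_mk_left _ _) hcm
          · intro hh
            rw [Sym2.eq_swap (a := c s(u', v'))] at hh
            obtain ⟨rfl, hcm⟩ := keymid u (c s(u, v)) v' (c s(u', v')) hu hv' hmT hmT' hh
            exact hinj u (Sym2.mem_mk_left _ _) (Sym2.mem_mk_right _ _) hcm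
        · constructor
          · intro hh
            rw [Sym2.eq_swap (a := c s(u, v))] at hh
            obtain ⟨rfl, hcm⟩ := keymid v (c s(u, v)) u' (c s(u', v')) hv hu' hmT hmT' hh
            exact hinj v (Sym2.mem_mk_right _ _) (Sym2.mem_mk_left _ _) hcm
          · intro hh
            rw [Sym2.eq_swap (a := c s(u, v)), Sym2.eq_swap (a := c s(u', v'))] at hh
            obtain ⟨rfl, hcm⟩ := keymid v (c s(u, v)) v' (c s(u', v')) hv hv' hmT hmT' hh
            exact hinj v (Sym2.mem_mk_right _ _) (Sym2.mem_mk_right _ _) hcm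
end

section
/- For every n ≥ t-2 there exists a graph on n vertices with exactly 2^{t-2}·(n-t+3) cliques (including the empty clique) that contains no weak K_t-immersion. -/
open SimpleGraph

def exGraph (n m : ℕ) : SimpleGraph (Fin n) where
  Adj u v := u ≠ v ∧ (u.val < m ∨ v.val < m)
  symm := by refine ⟨?_⟩; intro u v h; exact ⟨h.1.symm, h.2.symm⟩
  loopless := by refine ⟨?_⟩; intro u h; exact h.1 rfl

lemma firstEdge_mem {V : Type*} {G : SimpleGraph V} {u v : V} (p : G.Walk u v) (h : ¬ p.Nil) :
    s(u, p.getVert 1) ∈ p.edges := by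
  cases p with
  | nil => simp at h
  | cons hadj q => simp [SimpleGraph.Walk.edges_cons, SimpleGraph.Walk.getVert_cons_succ]

example : True := trivial

lemma clique_iff {n m : ℕ} (s : Finset (Fin n)) :
    (exGraph n m).IsClique (s : Set (Fin n)) ↔
      (s.filter fun v => ¬ v.val < m).card ≤ 1 := by
  rw [Finset.card_le_one]
  constructor
  · intro hc a ha b hb
    simp only [Finset.mem_filter] at ha hb
    by_contra hne
    have := hc (Finset.mem_coe.2 ha.1) (Finset.mem_coe.2 hb.1) hne
    rcases this.2 with h | h
    · exact ha.2 h
    · exact hb.2 h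
  · intro h1 u hu v hv hne
    refine ⟨hne, ?_⟩
    by_contra hlt
    push_neg at hlt
    exact hne (h1 u (Finset.mem_filter.2 ⟨Finset.mem_coe.1 hu, not_lt.2 hlt.1⟩)
      v (Finset.mem_filter.2 ⟨Finset.mem_coe.1 hv, not_lt.2 hlt.2⟩))

lemma cardK {n m : ℕ} (hm : m ≤ n) :
    (Finset.univ.filter fun v : Fin n => v.val < m).card = m := by
  have : (Finset.univ.filter fun v : Fin n => v.val < m)
      = (Finset.univ : Finset (Fin m)).map (Fin.castLEEmb hm) := by
    ext x
    simp only [Finset.mem_filter, Finset.mem_univ, true_and, Finset.mem_map,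
      Fin.castLEEmb, Function.Embedding.coeFn_mk]
    constructor
    · intro h; exact ⟨⟨x.val, h⟩, by simp [Fin.castLE, Fin.ext_iff]⟩
    · rintro ⟨y, rfl⟩; exact y.isLt
  rw [this, Finset.card_map, Finset.card_univ, Fintype.card_fin]

lemma cardKc {n m : ℕ} (hm : m ≤ n) :
    (Finset.univ.filter fun v : Fin n => ¬ v.val < m).card = n - m := by
  have h := Finset.card_filter_add_card_filter_not
    (s := (Finset.univ : Finset (Fin n))) (p := fun v => v.val < m)
  rw [cardK hm, Finset.card_univ, Fintype.card_fin] at h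
  omega

lemma count_small {n m : ℕ} (hm : m ≤ n) :
    ((Finset.univ.filter fun v : Fin n => ¬ v.val < m).powerset.filter
      fun b => b.card ≤ 1).card = n - m + 1 := by
  set Kc := Finset.univ.filter fun v : Fin n => ¬ v.val < m with hKc
  have he : (Kc.powerset.filter fun b => b.card ≤ 1)
      = Kc.powersetCard 0 ∪ Kc.powersetCard 1 := by
    ext b
    simp only [Finset.mem_filter, Finset.mem_powerset, Finset.mem_union,
      Finset.mem_powersetCard]
    have : b.card ≤ 1 ↔ b.card = 0 ∨ b.card = 1 := by omega
    tauto
  have hd : Disjoint (Kc.powersetCard 0) (Kc.powersetCard 1) := by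
    rw [Finset.disjoint_left]
    intro b h0 h1
    rw [Finset.mem_powersetCard] at h0 h1
    omega
  rw [he, Finset.card_union_of_disjoint hd, Finset.card_powersetCard,
    Finset.card_powersetCard, Nat.choose_zero_right, Nat.choose_one_right, cardKc hm]
  omega

lemma count_eq {n m : ℕ} (hm : m ≤ n) :
    (Finset.univ.filter fun s : Finset (Fin n) =>
      (s.filter fun v => ¬ v.val < m).card ≤ 1).card = 2 ^ m * (n - m + 1) := by
  classical
  set K := Finset.univ.filter fun v : Fin n => v.val < m with hK
  set Kc := Finset.univ.filter fun v : Fin n => ¬ v.val < m with hKc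
  have key : (Finset.univ.filter fun s : Finset (Fin n) =>
      (s.filter fun v => ¬ v.val < m).card ≤ 1).card
      = (K.powerset ×ˢ (Kc.powerset.filter fun b => b.card ≤ 1)).card := by
    refine Finset.card_bij'
      (fun s _ => (s.filter fun v => v.val < m, s.filter fun v => ¬ v.val < m))
      (fun p _ => p.1 ∪ p.2) ?_ ?_ ?_ ?_
    · intro s hs
      simp only [Finset.mem_filter, Finset.mem_univ, true_and] at hs
      simp only [Finset.mem_product, Finset.mem_powerset, Finset.mem_filter]
      refine ⟨fun x hx => ?_, fun x hx => ?_, hs⟩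
      · simp only [Finset.mem_filter] at hx ⊢
        simp [hK, hx.2]
      · simp only [Finset.mem_filter] at hx ⊢
        exact Finset.mem_filter.2 ⟨Finset.mem_univ _, hx.2⟩
    · intro p hp
      simp only [Finset.mem_product, Finset.mem_powerset, Finset.mem_filter] at hp
      simp only [Finset.mem_filter, Finset.mem_univ, true_and]
      refine le_trans (Finset.card_le_card fun x hx => ?_) hp.2.2
      simp only [Finset.mem_filter, Finset.mem_union] at hx
      rcases hx.1 with h | h
      · exact absurd (Finset.mem_filter.1 (hp.1 h)).2 hx.2
      · exact h
    · intro s _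
      exact Finset.filter_union_filter_not_eq _ s
    · intro p hp
      simp only [Finset.mem_product, Finset.mem_powerset, Finset.mem_filter] at hp
      obtain ⟨h1, h2, _⟩ := hp
      have e1 : (p.1 ∪ p.2).filter (fun v => v.val < m) = p.1 := by
        rw [Finset.filter_union]
        rw [Finset.filter_true_of_mem (fun x hx => by
          have := h1 hx; simp only [hK, Finset.mem_filter] at this; exact this.2)]
        rw [Finset.filter_false_of_mem (fun x hx => by
          have := h2 hx; simp only [hKc, Finset.mem_filter] at this; exact this.2)]
        simp
      have e2 : (p.1 ∪ p.2).filter (fun v => ¬ v.val < m) = p.2 := by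
        rw [Finset.filter_union]
        rw [Finset.filter_false_of_mem (fun x hx => by
          have := h1 hx; simp only [hK, Finset.mem_filter] at this
          exact not_not.2 this.2)]
        rw [Finset.filter_true_of_mem (fun x hx => by
          have := h2 hx; simp only [hKc, Finset.mem_filter] at this; exact this.2)]
        simp
      exact Prod.ext e1 e2
  rw [key, Finset.card_product, Finset.card_powerset, cardK hm, count_small hm]

lemma no_weak {n t : ℕ} (ht : 2 ≤ t) (T : Finset (Fin n)) (hT : T.card = t)
    (P : ∀ u v : Fin n, u ∈ T → v ∈ T → u ≠ v → (exGraph n (t-2)).Walk u v)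
    (hP : IsWeakImmersionFamily (exGraph n (t-2)) T P) : False := by
  classical
  have htn : t ≤ n := by simpa [hT] using Finset.card_le_univ T
  have hmn : t - 2 ≤ n := by omega
  have hex : ∃ u ∈ T, ¬ u.val < t - 2 := by
    by_contra h
    push_neg at h
    have hsub : T ⊆ Finset.univ.filter (fun v : Fin n => v.val < t - 2) := fun x hx =>
      Finset.mem_filter.2 ⟨Finset.mem_univ _, h x hx⟩
    have := Finset.card_le_card hsub
    rw [hT, cardK hmn] at this
    omega
  obtain ⟨u, hu, hum⟩ := hex
  obtain ⟨-, hdisj⟩ := hP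
  have hchoice : ∀ v : Fin n, ∃ w : Fin n, ∀ (hvT : v ∈ T) (hne : u ≠ v),
      w = (P u v hu hvT hne).getVert 1 := by
    intro v
    by_cases hc : v ∈ T ∧ u ≠ v
    · exact ⟨(P u v hu hc.1 hc.2).getVert 1, fun _ _ => rfl⟩
    · exact ⟨u, fun hvT hne => absurd ⟨hvT, hne⟩ hc⟩
  choose f hfspec using hchoice
  have hfirst : ∀ (v : Fin n) (hvT : v ∈ T) (hne : u ≠ v),
      s(u, f v) ∈ (P u v hu hvT hne).edges := by
    intro v hvT hne
    rw [hfspec v hvT hne]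
    exact firstEdge_mem _ (SimpleGraph.Walk.not_nil_of_ne hne)
  have hmaps : ∀ v ∈ T.erase u, f v ∈ Finset.univ.filter (fun w : Fin n => w.val < t - 2) := by
    intro v hv
    obtain ⟨hvu, hvT⟩ := Finset.mem_erase.1 hv
    have hne : u ≠ v := fun h => hvu h.symm
    have hadj : (exGraph n (t-2)).Adj u ((P u v hu hvT hne).getVert 1) :=
      SimpleGraph.Walk.adj_snd (SimpleGraph.Walk.not_nil_of_ne hne)
    rw [hfspec v hvT hne]
    rcases hadj.2 with h | h
    · exact absurd h hum
    · exact Finset.mem_filter.2 ⟨Finset.mem_univ _, h⟩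
  have hinj : Set.InjOn f (T.erase u) := by
    intro v hv v' hv' heq
    rw [Finset.mem_coe, Finset.mem_erase] at hv hv'
    obtain ⟨hvu, hvT⟩ := hv
    obtain ⟨hv'u, hv'T⟩ := hv'
    have hne : u ≠ v := fun h => hvu h.symm
    have hne' : u ≠ v' := fun h => hv'u h.symm
    by_contra hvv'
    have hsym : s(u, v) ≠ s(u, v') := by
      intro h
      rw [Sym2.eq_iff] at h
      rcases h with ⟨-, h⟩ | ⟨h1, -⟩
      · exact hvv' h
      · exact hne' h1
    have h1 := hfirst v hvT hne
    have h2 := hfirst v' hv'T hne'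
    rw [heq] at h1
    exact hdisj u v' hu hv'T hne' u v hu hvT hne hsym.symm _ h2 h1
  have hcard := Finset.card_le_card_of_injOn f hmaps hinj
  rw [Finset.card_erase_of_mem hu, hT, cardK hmn] at hcard
  omega

theorem extremal_graph_without_weak_immersion (n t : ℕ) (ht : 2 ≤ t) (hn : t - 2 ≤ n) :
    ∃ G : SimpleGraph (Fin n),
      cliqueCount G = 2 ^ (t - 2) * (n + 3 - t) ∧
      ¬ ∃ T : Finset (Fin n), T.card = t ∧
          ∃ P : ∀ u v : Fin n, u ∈ T → v ∈ T → u ≠ v → G.Walk u v,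
            IsWeakImmersionFamily G T P := by
  classical
  refine ⟨exGraph n (t - 2), ?_, ?_⟩
  · unfold cliqueCount
    have hset : {s : Finset (Fin n) | (exGraph n (t - 2)).IsClique (s : Set (Fin n))}
        = ↑(Finset.univ.filter fun s : Finset (Fin n) =>
            (s.filter fun v => ¬ v.val < t - 2).card ≤ 1) := by
      ext s
      simp only [Set.mem_setOf_eq, Finset.coe_filter, Finset.mem_univ, true_and,
        Set.mem_setOf_eq]
      exact clique_iff s
    rw [hset, Set.ncard_coe_finset, count_eq hn]
    congr 1
    omega
  · rintro ⟨T, hT, P, hP⟩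
    exact no_weak ht T hT P hP
end

section
/- Let G be a graph on n vertices with minimum degree at least n-Δ-1, and let T be a set of t vertices of G such that the number of non-adjacent pairs within T is at most n-t-2Δ. Then G contains a subdivision of K_t whose branch vertices are exactly the vertices of T, using only edges and internally-disjoint paths of length two with internal vertices outside T. -/
open SimpleGraph

theorem subdivision_with_prescribed_branch_vertices {V : Type*} [Fintype V] [DecidableEq V]
    (G : SimpleGraph V) [DecidableRel G.Adj] (n t Δ : ℕ)
    (hn : Fintype.card V = n)
    (hdeg : ∀ v : V, n - Δ - 1 ≤ G.degree v)
    (T : Finset V) (hT : T.card = t)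
    (hmiss : (missingPairs G ↑T : ℤ) ≤ 2 * ((n : ℤ) - t - 2 * Δ)) :
    ∃ P : ∀ u v : V, u ∈ T → v ∈ T → u ≠ v → G.Walk u v,
      IsSubdivisionFamily G T P ∧
      ∀ (u v : V) (hu : u ∈ T) (hv : v ∈ T) (h : u ≠ v), (P u v hu hv h).length ≤ 2 := by
  classical
  -- ordered missing pairs as a Finset
  set O : Finset (V × V) := Finset.univ.filter
    (fun p => p.1 ∈ T ∧ p.2 ∈ T ∧ p.1 ≠ p.2 ∧ ¬ G.Adj p.1 p.2) with hO
  have hOmem : ∀ p : V × V, p ∈ O ↔ p.1 ∈ T ∧ p.2 ∈ T ∧ p.1 ≠ p.2 ∧ ¬ G.Adj p.1 p.2 := by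
    intro p; simp [hO]
  set M : Finset (Sym2 V) := O.image (fun p => s(p.1, p.2)) with hM
  -- missingPairs = O.card
  have hcard : missingPairs G ↑T = O.card := by
    rw [missingPairs, show {p : V × V | p.1 ∈ (↑T : Set V) ∧ p.2 ∈ (↑T : Set V) ∧ p.1 ≠ p.2
        ∧ ¬ G.Adj p.1 p.2} = ↑O from ?_, Set.ncard_coe_finset]
    ext p; simp [hOmem p]
  -- 2 * M.card ≤ O.card
  have h2m : 2 * M.card ≤ O.card := by
    rw [Finset.card_eq_sum_card_fiberwise (f := fun p : V × V => s(p.1, p.2)) (t := M)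
      (fun p hp => Finset.mem_image_of_mem _ hp)]
    calc 2 * M.card = ∑ _e ∈ M, 2 := by rw [Finset.sum_const, smul_eq_mul, mul_comm]
    _ ≤ _ := by
        apply Finset.sum_le_sum
        intro e he
        obtain ⟨p, hp, hpe⟩ := Finset.mem_image.mp he
        have hps : p.swap ∈ O := by
          rw [hOmem] at hp ⊢
          exact ⟨hp.2.1, hp.1, hp.2.2.1.symm, fun a => hp.2.2.2 a.symm⟩
        have hpsne : p ≠ p.swap := by
          intro hcon
          exact (hOmem p).mp hp |>.2.2.1 (congrArg Prod.fst hcon ▸ rfl)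
        have hsub : ({p, p.swap} : Finset (V × V)) ⊆
            O.filter (fun q : V × V => s(q.1, q.2) = e) := by
          intro q hq
          rcases Finset.mem_insert.mp hq with h | h
          · subst h; exact Finset.mem_filter.mpr ⟨hp, hpe⟩
          · rw [Finset.mem_singleton.mp h]
            refine Finset.mem_filter.mpr ⟨hps, ?_⟩
            rw [show (p.swap).1 = p.2 from rfl, show (p.swap).2 = p.1 from rfl,
              Sym2.eq_swap]
            exact hpe
        calc (2 : ℕ) = ({p, p.swap} : Finset (V × V)).card := (Finset.card_pair hpsne).symm
        _ ≤ _ := Finset.card_le_card hsub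
  -- m + t + 2Δ ≤ n
  have hmn : M.card + t + 2 * Δ ≤ n := by
    rw [hcard] at hmiss
    omega
  -- candidate sets
  have hC : ∀ e ∈ M, M.card ≤
      (Finset.univ.filter (fun w => w ∉ T ∧ ∀ x ∈ e, G.Adj x w)).card := by
    intro e he
    obtain ⟨p, hp, hpe⟩ := Finset.mem_image.mp he
    obtain ⟨hu, hv, hne, hnadj⟩ := (hOmem p).mp hp
    set u := p.1; set v := p.2
    have hmeme : ∀ x, x ∈ e ↔ x = u ∨ x = v := by
      intro x; rw [← hpe, Sym2.mem_iff]
    set A : Finset V := Finset.univ.filter (fun w => G.Adj u w ∧ G.Adj v w) with hA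
    have hBu : ∀ z : V, (Finset.univ.filter (fun w => ¬ G.Adj z w)).card ≤ Δ + 1 := by
      intro z
      have h1 : (Finset.univ.filter (fun w => G.Adj z w)).card
          + (Finset.univ.filter (fun w => ¬ G.Adj z w)).card = n := by
        rw [Finset.card_filter_add_card_filter_not, Finset.card_univ, hn]
      have h2 : (Finset.univ.filter (fun w => G.Adj z w)).card = G.degree z := by
        rw [← SimpleGraph.neighborFinset_eq_filter, SimpleGraph.card_neighborFinset_eq_degree]
      have := hdeg z
      omega
    have hAcard : n ≤ A.card + 2 * Δ + 2 := by
      have hcover : (Finset.univ : Finset V) ⊆ A ∪ (Finset.univ.filter (fun w => ¬ G.Adj u w))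
          ∪ (Finset.univ.filter (fun w => ¬ G.Adj v w)) := by
        intro w _
        simp only [hA, Finset.mem_union, Finset.mem_filter, Finset.mem_univ, true_and]
        tauto
      have := Finset.card_le_card hcover
      have h3 := Finset.card_union_le (A ∪ (Finset.univ.filter (fun w => ¬ G.Adj u w)))
        (Finset.univ.filter (fun w => ¬ G.Adj v w))
      have h4 := Finset.card_union_le A (Finset.univ.filter (fun w => ¬ G.Adj u w))
      have h5 := hBu u
      have h6 := hBu v
      rw [Finset.card_univ, hn] at this
      omega
    set C : Finset V := Finset.univ.filter (fun w => w ∉ T ∧ ∀ x ∈ e, G.Adj x w) with hCdef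
    have hsub : A ⊆ C ∪ ((T.erase u).erase v) := by
      intro w hw
      simp only [hA, Finset.mem_filter, Finset.mem_univ, true_and] at hw
      by_cases hwT : w ∈ T
      · refine Finset.mem_union_right _ ?_
        refine Finset.mem_erase.mpr ⟨hw.2.ne', Finset.mem_erase.mpr ⟨hw.1.ne', hwT⟩⟩
      · refine Finset.mem_union_left _ ?_
        simp only [hCdef, Finset.mem_filter, Finset.mem_univ, true_and]
        refine ⟨hwT, fun x hx => ?_⟩
        rcases (hmeme x).mp hx with h | h
        · exact h ▸ hw.1
        · exact h ▸ hw.2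
    have hT2 : 2 ≤ t := by
      have : ({u, v} : Finset V) ⊆ T := by
        intro x hx
        rcases Finset.mem_insert.mp hx with h | h
        · exact h ▸ hu
        · exact (Finset.mem_singleton.mp h) ▸ hv
      have := Finset.card_le_card this
      rw [Finset.card_pair hne] at this
      omega
    have herase : ((T.erase u).erase v).card = t - 2 := by
      rw [Finset.card_erase_of_mem (Finset.mem_erase.mpr ⟨hne.symm, hv⟩),
        Finset.card_erase_of_mem hu, hT]
      omega
    have h7 := Finset.card_le_card hsub
    have h8 := Finset.card_union_le C ((T.erase u).erase v)
    omega
  -- Hall's theorem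
  have hhall : ∀ s : Finset {e : Sym2 V // e ∈ M}, s.card ≤ (s.biUnion (fun e =>
      Finset.univ.filter (fun w => w ∉ T ∧ ∀ x ∈ e.1, G.Adj x w))).card := by
    intro s
    rcases s.eq_empty_or_nonempty with rfl | ⟨e, he⟩
    · simp
    · calc s.card ≤ Fintype.card {e : Sym2 V // e ∈ M} := Finset.card_le_univ s
      _ = M.card := Fintype.card_coe M
      _ ≤ _ := le_trans (hC e.1 e.2)
          (Finset.card_le_card (Finset.subset_biUnion_of_mem (fun e : {e : Sym2 V // e ∈ M} => Finset.univ.filter (fun w => w ∉ T ∧ ∀ x ∈ e.1, G.Adj x w)) he))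
  obtain ⟨f, hfinj, hfmem⟩ := (Finset.all_card_le_biUnion_card_iff_exists_injective
      (fun e : {e : Sym2 V // e ∈ M} =>
        Finset.univ.filter (fun w => w ∉ T ∧ ∀ x ∈ e.1, G.Adj x w))).mp hhall
  -- basic facts about f
  have hmemM : ∀ (u v : V), u ∈ T → v ∈ T → u ≠ v → ¬ G.Adj u v → s(u, v) ∈ M := by
    intro u v hu hv h hadj
    exact Finset.mem_image_of_mem _ ((hOmem (u, v)).mpr ⟨hu, hv, h, hadj⟩)
  have hfprop : ∀ (e : Sym2 V) (he : e ∈ M),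
      f ⟨e, he⟩ ∉ T ∧ ∀ x ∈ e, G.Adj x (f ⟨e, he⟩) := by
    intro e he
    have := hfmem ⟨e, he⟩
    simpa using this
  -- the path family
  refine ⟨fun u v hu hv h =>
    if hadj : G.Adj u v then Walk.cons hadj Walk.nil
    else
      Walk.cons ((hfprop _ (hmemM u v hu hv h hadj)).2 u (Sym2.mem_mk_left u v))
        (Walk.cons (((hfprop _ (hmemM u v hu hv h hadj)).2 v (Sym2.mem_mk_right u v)).symm)
          Walk.nil), ⟨?_, ?_, ?_⟩, ?_⟩
  · -- paths
    intro u v hu hv h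
    by_cases hadj : G.Adj u v
    · simp only [dif_pos hadj]
      simp [Walk.isPath_def, h]
    · simp only [dif_neg hadj]
      have hfT := (hfprop _ (hmemM u v hu hv h hadj)).1
      have h1 : u ≠ f ⟨s(u, v), hmemM u v hu hv h hadj⟩ := fun hc => hfT (hc ▸ hu)
      have h2 : f ⟨s(u, v), hmemM u v hu hv h hadj⟩ ≠ v :=
        fun hc => hfT (by rw [hc]; exact hv)
      simp [Walk.isPath_def, h, h1, h2]
  · -- no internal vertex in T
    intro u v hu hv h w hw hwT
    by_cases hadj : G.Adj u v
    · simp only [dif_pos hadj] at hw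
      simp only [Walk.support_cons, Walk.support_nil, List.mem_cons,
        List.mem_singleton, List.not_mem_nil, or_false] at hw
      tauto
    · simp only [dif_neg hadj] at hw
      have hfT := (hfprop _ (hmemM u v hu hv h hadj)).1
      simp only [Walk.support_cons, Walk.support_nil, List.mem_cons,
        List.not_mem_nil, or_false] at hw
      rcases hw with rfl | rfl | rfl
      · exact Or.inl rfl
      · exact absurd hwT hfT
      · exact Or.inr rfl
  · -- internal disjointness
    intro u v hu hv h u' v' hu' hv' h' hne w hw hwu hwv hw'
    by_cases hadj : G.Adj u v
    · simp only [dif_pos hadj] at hw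
      simp only [Walk.support_cons, Walk.support_nil, List.mem_cons,
        List.mem_singleton, List.not_mem_nil, or_false] at hw
      rcases hw with rfl | rfl
      · exact absurd rfl hwu
      · exact absurd rfl hwv
    · simp only [dif_neg hadj] at hw
      simp only [Walk.support_cons, Walk.support_nil, List.mem_cons,
        List.not_mem_nil, or_false] at hw
      rcases hw with rfl | rfl | rfl
      · exact absurd rfl hwu
      · -- w is the internal vertex f ⟨s(u,v), _⟩
        by_cases hadj' : G.Adj u' v'
        · simp only [dif_pos hadj'] at hw'
          simp only [Walk.support_cons, Walk.support_nil, List.mem_cons,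
            List.mem_singleton, List.not_mem_nil, or_false] at hw'
          tauto
        · simp only [dif_neg hadj'] at hw'
          simp only [Walk.support_cons, Walk.support_nil, List.mem_cons,
            List.not_mem_nil, or_false] at hw'
          rcases hw' with h1 | h1 | h1
          · exact Or.inl h1
          · exfalso
            have := hfinj h1
            exact hne (congrArg Subtype.val this)
          · exact Or.inr h1
      · exact absurd rfl hwv
  · -- lengths
    intro u v hu hv h
    by_cases hadj : G.Adj u v
    · simp only [dif_pos hadj]; simp
    · simp only [dif_neg hadj]; simp
end

section
/- Let G be a graph on n vertices with minimum degree at least n-Δ-1. Define t(G) to be the maximum t such that G has a t-vertex subset with at most n-t missing edges, and σ(G) the largest h such that G contains a K_h-subdivision. Then t(G) - Δ ≤ σ(G) ≤ t(G). -/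
open SimpleGraph

/-- The parameter `t(G)`: the largest `t` such that some `t`-set of vertices has at most
`n - t` missing edges (stated via ordered pairs, so `2 * (n - t)` missing ordered pairs). -/
noncomputable def tparam {V : Type*} [Fintype V] (G : SimpleGraph V) : ℕ :=
  sSup {t | ∃ T : Finset V, T.card = t ∧ missingPairs G ↑T ≤ 2 * (Fintype.card V - t)}

/-- The clique subdivision number `σ(G)`. -/
noncomputable def subdivNum {V : Type*} [Fintype V] (G : SimpleGraph V) : ℕ :=
  sSup {h | HasKSubdivision G h}

section AuxSubdivision

open Finset

set_option linter.unusedSectionVars false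

variable {V : Type*} [Fintype V] [DecidableEq V] (G : SimpleGraph V) [DecidableRel G.Adj]

/-- The finset of missing (unordered) pairs within `A`. -/
def MM (A : Finset V) : Finset (Sym2 V) :=
  ((A ×ˢ A).filter (fun p => p.1 ≠ p.2 ∧ ¬ G.Adj p.1 p.2)).image (fun p : V × V => s(p.1, p.2))

lemma mem_MM_iff {A : Finset V} {u v : V} :
    s(u, v) ∈ MM G A ↔ u ∈ A ∧ v ∈ A ∧ u ≠ v ∧ ¬ G.Adj u v := by
  constructor
  · rintro h
    simp only [MM, Finset.mem_image, Finset.mem_filter, Finset.mem_product] at h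
    obtain ⟨⟨a, b⟩, ⟨⟨ha, hb⟩, hne, hna⟩, heq⟩ := h
    rw [Sym2.eq_iff] at heq
    rcases heq with ⟨rfl, rfl⟩ | ⟨rfl, rfl⟩
    · exact ⟨ha, hb, hne, hna⟩
    · exact ⟨hb, ha, hne.symm, fun h => hna h.symm⟩
  · rintro ⟨hu, hv, hne, hna⟩
    simp only [MM, Finset.mem_image, Finset.mem_filter, Finset.mem_product]
    exact ⟨(u, v), ⟨⟨hu, hv⟩, hne, hna⟩, rfl⟩

lemma MM_mono {A B : Finset V} (h : A ⊆ B) : MM G A ⊆ MM G B := by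
  intro e he
  induction e with
  | _ u v =>
    rw [mem_MM_iff] at he ⊢
    exact ⟨h he.1, h he.2.1, he.2.2⟩

lemma missingPairs_eq (A : Finset V) : missingPairs G ↑A = 2 * (MM G A).card := by
  classical
  set O : Finset (V × V) := (A ×ˢ A).filter (fun p => p.1 ≠ p.2 ∧ ¬ G.Adj p.1 p.2) with hO
  have h1 : missingPairs G ↑A = O.card := by
    rw [missingPairs]
    have : {p : V × V | p.1 ∈ (A : Set V) ∧ p.2 ∈ (A : Set V) ∧ p.1 ≠ p.2 ∧ ¬ G.Adj p.1 p.2}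
        = (O : Set (V × V)) := by
      ext p
      simp only [hO, Set.mem_setOf_eq, Finset.coe_filter, Finset.mem_product,
        Finset.mem_coe, Set.mem_setOf_eq]
      tauto
    rw [this, Set.ncard_coe_finset]
  have h2 : O.card = 2 * (MM G A).card := by
    have hfib : ∀ b ∈ O.image (fun p : V × V => s(p.1, p.2)), (O.filter fun a => (fun p : V × V => s(p.1, p.2)) a = b).card = 2 := by
      intro b hb
      simp only [Finset.mem_image] at hb
      obtain ⟨⟨u, v⟩, huv, rfl⟩ := hb
      have hmem := huv
      rw [hO, Finset.mem_filter, Finset.mem_product] at hmem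
      obtain ⟨⟨hu, hv⟩, hne, hna⟩ := hmem
      have : O.filter (fun a => (fun p : V × V => s(p.1, p.2)) a = (fun p : V × V => s(p.1, p.2)) (u, v)) = {(u, v), (v, u)} := by
        ext ⟨a, b⟩
        simp only [Finset.mem_filter, Finset.mem_insert, Finset.mem_singleton, Prod.mk.injEq]
        constructor
        · rintro ⟨hab, heq⟩
          have := Sym2.eq_iff.mp heq
          tauto
        · rintro (⟨rfl, rfl⟩ | ⟨rfl, rfl⟩)
          · exact ⟨huv, rfl⟩
          · refine ⟨?_, Sym2.eq_swap⟩
            rw [hO, Finset.mem_filter, Finset.mem_product]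
            exact ⟨⟨hv, hu⟩, hne.symm, fun h => hna h.symm⟩
      rw [this]
      rw [Finset.card_insert_of_notMem (by simp [Prod.ext_iff, hne]), Finset.card_singleton]
    have hMM : MM G A = O.image (fun p : V × V => s(p.1, p.2)) := by rw [MM, hO]
    calc O.card = ∑ b ∈ O.image (fun p : V × V => s(p.1, p.2)), (O.filter fun a => (fun p : V × V => s(p.1, p.2)) a = b).card :=
          Finset.card_eq_sum_card_image (fun p : V × V => s(p.1, p.2)) O
      _ = ∑ _b ∈ O.image (fun p : V × V => s(p.1, p.2)), 2 := Finset.sum_congr rfl hfib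
      _ = 2 * (MM G A).card := by rw [Finset.sum_const, smul_eq_mul, mul_comm, hMM]
  rw [h1, h2]

lemma internal_vertex {u v : V} (q : G.Walk u v) (hp : q.IsPath) (hne : u ≠ v)
    (hna : ¬ G.Adj u v) : ∃ b ∈ q.support, b ≠ u ∧ b ≠ v := by
  cases q with
  | nil => exact absurd rfl hne
  | @cons _ x _ h q' =>
    refine ⟨x, by simp [SimpleGraph.Walk.support_cons, q'.start_mem_support], ?_, ?_⟩
    · exact fun hxu => G.irrefl (hxu ▸ h)
    · rintro rfl
      have : q' = SimpleGraph.Walk.nil :=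
        (SimpleGraph.Walk.isPath_iff_eq_nil (p := q')).mp hp.of_cons
      exact hna h

lemma upper_lemma {k : ℕ} (hk : HasKSubdivision G k) :
    ∃ T : Finset V, T.card = k ∧ (MM G T).card ≤ Fintype.card V - k := by
  classical
  obtain ⟨T, hTcard, P, h1, h2, h3⟩ := hk
  refine ⟨T, hTcard, ?_⟩
  have hout : ∀ e : Sym2 V, s(e.out.1, e.out.2) = e := fun e => Quot.out_eq e
  have hprops : ∀ e ∈ MM G T, e.out.1 ∈ T ∧ e.out.2 ∈ T ∧ e.out.1 ≠ e.out.2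
      ∧ ¬ G.Adj e.out.1 e.out.2 := by
    intro e he
    rw [← hout e, mem_MM_iff] at he
    exact he
  have key : ∀ e : Sym2 V, ∃ b, e ∈ MM G T → b ∉ T ∧ b ≠ e.out.1 ∧ b ≠ e.out.2 ∧
      ∀ (hu : e.out.1 ∈ T) (hv : e.out.2 ∈ T) (hne : e.out.1 ≠ e.out.2),
        b ∈ (P e.out.1 e.out.2 hu hv hne).support := by
    intro e
    by_cases he : e ∈ MM G T
    swap
    · exact ⟨e.out.1, fun h => absurd h he⟩
    refine ?_
    obtain ⟨hu, hv, hne, hna⟩ := hprops e he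
    obtain ⟨b, hbs, hbu, hbv⟩ := internal_vertex G (P _ _ hu hv hne) (h1 _ _ hu hv hne) hne hna
    refine ⟨b, fun _ => ⟨?_, hbu, hbv, fun _ _ _ => hbs⟩⟩
    intro hbT
    rcases h2 _ _ hu hv hne b hbs hbT with rfl | rfl
    · exact hbu rfl
    · exact hbv rfl
  choose φ hφ using key
  have hφ1 : ∀ e ∈ MM G T, φ e ∉ T := fun e he => (hφ e he).1
  have hφ2 : ∀ e ∈ MM G T, φ e ≠ e.out.1 := fun e he => (hφ e he).2.1
  have hφ3 : ∀ e ∈ MM G T, φ e ≠ e.out.2 := fun e he => (hφ e he).2.2.1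
  have hφ4 : ∀ e (he : e ∈ MM G T) hu hv hne, φ e ∈ (P e.out.1 e.out.2 hu hv hne).support :=
    fun e he hu hv hne => (hφ e he).2.2.2 hu hv hne
  have hinj : Set.InjOn φ (MM G T : Set (Sym2 V)) := by
    intro e₁ he₁ e₂ he₂ heq
    by_contra hne12
    obtain ⟨hu1, hv1, hne1, _⟩ := hprops e₁ (by simpa using he₁)
    obtain ⟨hu2, hv2, hne2, _⟩ := hprops e₂ (by simpa using he₂)
    have he₁' : e₁ ∈ MM G T := by simpa using he₁
    have he₂' : e₂ ∈ MM G T := by simpa using he₂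
    have hsne : s(e₁.out.1, e₁.out.2) ≠ s(e₂.out.1, e₂.out.2) := by
      rw [hout, hout]; exact hne12
    have := h3 _ _ hu1 hv1 hne1 _ _ hu2 hv2 hne2 hsne (φ e₁)
      (hφ4 e₁ he₁' hu1 hv1 hne1) (hφ2 e₁ he₁') (hφ3 e₁ he₁')
      (heq ▸ hφ4 e₂ he₂' hu2 hv2 hne2)
    rcases this with h | h
    · exact hφ2 e₂ he₂' (heq ▸ h)
    · exact hφ3 e₂ he₂' (heq ▸ h)
  have hmaps : ∀ e ∈ MM G T, φ e ∈ Tᶜ := fun e he => Finset.mem_compl.mpr (hφ1 e he)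
  have := Finset.card_le_card_of_injOn φ hmaps hinj
  rwa [Finset.card_compl, hTcard] at this

lemma mem_of_mem_MM {A : Finset V} {e : Sym2 V} (he : e ∈ MM G A) : ∀ x ∈ e, x ∈ A := by
  induction e with
  | _ u v =>
    rw [mem_MM_iff] at he
    intro x hx
    rcases Sym2.mem_iff.mp hx with rfl | rfl
    exacts [he.1, he.2.1]

set_option maxHeartbeats 1600000 in
lemma lower_lemma (Δ : ℕ) (hdeg : ∀ v : V, Fintype.card V - Δ - 1 ≤ G.degree v)
    (T : Finset V) (hm : (MM G T).card ≤ Tᶜ.card) :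
    ∃ S : Finset V, T.card ≤ S.card + Δ ∧ ∃ P, IsSubdivisionFamily G S P := by
  classical
  set W : Finset V := Tᶜ with hW
  set r : Sym2 V → Finset V := fun e => W.filter (fun w => ∀ x ∈ e, G.Adj x w) with hr
  set m : ℕ := (MM G T).card with hmdef
  obtain ⟨S, hST, hTS, hall⟩ :
      ∃ S : Finset V, S ⊆ T ∧ T.card ≤ S.card + Δ ∧
        ∀ F ⊆ MM G S, F.card ≤ (F.biUnion r).card := by
    set key : Finset (Sym2 V) → ℤ :=
      fun F => ((F.card : ℤ) - ((F.biUnion r).card : ℤ)) * (m + 1) + F.card with hkey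
    obtain ⟨F0, hF0mem, hF0max⟩ := Finset.exists_max_image ((MM G T).powerset) key ⟨∅, by simp⟩
    rw [Finset.mem_powerset] at hF0mem
    set d : ℤ := (F0.card : ℤ) - ((F0.biUnion r).card : ℤ) with hd
    have hF0m : (F0.card : ℤ) ≤ (m : ℤ) := by exact_mod_cast Finset.card_le_card hF0mem
    have claimA : ∀ F ⊆ MM G T, (F.card : ℤ) - ((F.biUnion r).card : ℤ) ≤ d := by
      intro F hF
      by_contra hlt
      push_neg at hlt
      have hd1 : d + 1 ≤ (F.card : ℤ) - ((F.biUnion r).card : ℤ) := hlt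
      have h1 := hF0max F (Finset.mem_powerset.mpr hF)
      rw [hkey] at h1
      dsimp only at h1
      rw [← hd] at h1
      have hexp : (d + 1) * ((m : ℤ) + 1) = d * ((m : ℤ) + 1) + ((m : ℤ) + 1) := by ring
      have hmul : (d + 1) * ((m : ℤ) + 1) ≤
          ((F.card : ℤ) - ((F.biUnion r).card : ℤ)) * ((m : ℤ) + 1) :=
        mul_le_mul_of_nonneg_right hd1 (by positivity)
      have hF0nn : (0 : ℤ) ≤ (F.card : ℤ) := by positivity
      linarith [h1, hmul, hexp, hF0m, hF0nn]
    by_cases hd0 : d ≤ 0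
    · refine ⟨T, le_refl T, Nat.le_add_right _ _, fun F hF => ?_⟩
      have := claimA F hF
      have : (F.card : ℤ) ≤ ((F.biUnion r).card : ℤ) := by linarith
      exact_mod_cast this
    · push_neg at hd0
      have hd1 : (1 : ℤ) ≤ d := hd0
      have hNW : F0.biUnion r ⊆ W := Finset.biUnion_subset.mpr fun e _ => Finset.filter_subset _ _
      have hcardN : (F0.biUnion r).card < W.card := by
        have hmW : (m : ℤ) ≤ (W.card : ℤ) := by exact_mod_cast hm
        have : ((F0.biUnion r).card : ℤ) < (W.card : ℤ) := by
          have : ((F0.biUnion r).card : ℤ) = (F0.card : ℤ) - d := by rw [hd]; ring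
          linarith
        exact_mod_cast this
      obtain ⟨w, hwW, hwN⟩ : ∃ w ∈ W, w ∉ F0.biUnion r := by
        by_contra hcon
        push_neg at hcon
        have hsub2 : W ⊆ F0.biUnion r := fun w hw => hcon w hw
        exact absurd (Finset.card_le_card hsub2) (by omega)
      set S := T.filter (fun x => G.Adj w x) with hS
      have hST : S ⊆ T := Finset.filter_subset _ _
      have hwT : w ∉ T := by
        rw [hW, Finset.mem_compl] at hwW
        exact hwW
      refine ⟨S, hST, ?_, ?_⟩
      · -- T.card ≤ S.card + Δ
        have hTsub : T ⊆ S ∪ (((G.neighborFinset w)ᶜ).erase w) := by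
          intro x hx
          rw [Finset.mem_union]
          by_cases hA : G.Adj w x
          · exact Or.inl (by rw [hS, Finset.mem_filter]; exact ⟨hx, hA⟩)
          · refine Or.inr ?_
            rw [Finset.mem_erase, Finset.mem_compl, SimpleGraph.mem_neighborFinset]
            exact ⟨fun h => hwT (h ▸ hx), hA⟩
        have hcc : (((G.neighborFinset w)ᶜ).erase w).card ≤ Δ := by
          have h3 : w ∈ (G.neighborFinset w)ᶜ := by
            rw [Finset.mem_compl, SimpleGraph.mem_neighborFinset]
            exact G.irrefl
          rw [Finset.card_erase_of_mem h3, Finset.card_compl,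
            SimpleGraph.card_neighborFinset_eq_degree]
          have h4 : G.degree w ≤ Fintype.card V := by
            rw [← SimpleGraph.card_neighborFinset_eq_degree, ← Finset.card_univ]
            exact Finset.card_le_card (Finset.subset_univ _)
          have h2 := hdeg w
          omega
        calc T.card ≤ (S ∪ (((G.neighborFinset w)ᶜ).erase w)).card := Finset.card_le_card hTsub
          _ ≤ S.card + (((G.neighborFinset w)ᶜ).erase w).card := Finset.card_union_le _ _
          _ ≤ S.card + Δ := by omega
      · -- Hall condition on MM G S
        intro F hF
        by_contra hlt
        push_neg at hlt
        have hdisj : Disjoint F F0 := by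
          rw [Finset.disjoint_left]
          intro e heF heF0
          have hwr : w ∉ r e := fun h => hwN (Finset.mem_biUnion.mpr ⟨e, heF0, h⟩)
          have hex : ∃ x ∈ e, ¬ G.Adj x w := by
            by_contra hc
            push_neg at hc
            exact hwr (by rw [hr]; exact Finset.mem_filter.mpr ⟨hwW, hc⟩)
          obtain ⟨x, hxe, hxw⟩ := hex
          have hxS : x ∈ S := mem_of_mem_MM G (hF heF) x hxe
          rw [hS, Finset.mem_filter] at hxS
          exact hxw hxS.2.symm
        have hFT : F ⊆ MM G T := hF.trans (MM_mono G hST)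
        have hunion : F ∪ F0 ⊆ MM G T := Finset.union_subset hFT hF0mem
        have hcardU : (F ∪ F0).card = F.card + F0.card := Finset.card_union_of_disjoint hdisj
        have hNsub : (F ∪ F0).biUnion r ⊆ F.biUnion r ∪ F0.biUnion r := by
          intro x hx
          rw [Finset.mem_biUnion] at hx
          obtain ⟨e, he, hxe⟩ := hx
          rw [Finset.mem_union] at he
          rw [Finset.mem_union, Finset.mem_biUnion, Finset.mem_biUnion]
          rcases he with he | he
          · exact Or.inl ⟨e, he, hxe⟩
          · exact Or.inr ⟨e, he, hxe⟩
        have hNcard : ((F ∪ F0).biUnion r).card ≤ (F.biUnion r).card + (F0.biUnion r).card :=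
          (Finset.card_le_card hNsub).trans (Finset.card_union_le _ _)
        have hA := claimA (F ∪ F0) hunion
        have c1 : ((F ∪ F0).card : ℤ) = (F.card : ℤ) + (F0.card : ℤ) := by exact_mod_cast hcardU
        have c2 : (((F ∪ F0).biUnion r).card : ℤ) ≤
            ((F.biUnion r).card : ℤ) + ((F0.biUnion r).card : ℤ) := by exact_mod_cast hNcard
        have c3 : ((F.biUnion r).card : ℤ) < (F.card : ℤ) := by exact_mod_cast hlt
        rw [hd] at hd1
        linarith
  -- Hall's theorem application
  have hall' : ∀ s : Finset {e // e ∈ MM G S}, s.card ≤ (s.biUnion (fun e => r e.1)).card := by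
    intro s
    have h1 : s.card = (s.image Subtype.val).card :=
      (Finset.card_image_of_injective s Subtype.val_injective).symm
    have h2 : (s.image Subtype.val).biUnion r = s.biUnion (fun e => r e.1) :=
      Finset.image_biUnion
    rw [h1, ← h2]
    refine hall _ ?_
    intro e he
    rw [Finset.mem_image] at he
    obtain ⟨⟨e', he'⟩, _, rfl⟩ := he
    exact he'
  obtain ⟨f, hfinj, hfr⟩ :=
    (Finset.all_card_le_biUnion_card_iff_exists_injective (fun e : {e // e ∈ MM G S} => r e.1)).mp
      hall'
  have hmemS : ∀ u v : V, u ∈ S → v ∈ S → u ≠ v → ¬ G.Adj u v → s(u, v) ∈ MM G S :=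
    fun u v hu hv hne hna => (mem_MM_iff G).mpr ⟨hu, hv, hne, hna⟩
  set gg : ∀ u v : V, u ∈ S → v ∈ S → u ≠ v → ¬ G.Adj u v → V :=
    fun u v hu hv hne hna => f ⟨s(u, v), hmemS u v hu hv hne hna⟩ with hgg
  have hgr : ∀ (u v : V) (hu : u ∈ S) (hv : v ∈ S) (hne : u ≠ v) (hna : ¬ G.Adj u v),
      gg u v hu hv hne hna ∈ r s(u, v) := fun u v hu hv hne hna => hfr _
  have hadj1 : ∀ (u v : V) (hu : u ∈ S) (hv : v ∈ S) (hne : u ≠ v) (hna : ¬ G.Adj u v),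
      G.Adj u (gg u v hu hv hne hna) := by
    intro u v hu hv hne hna
    have h := hgr u v hu hv hne hna
    rw [hr, Finset.mem_filter] at h
    exact h.2 u (Sym2.mem_mk_left u v)
  have hadj2 : ∀ (u v : V) (hu : u ∈ S) (hv : v ∈ S) (hne : u ≠ v) (hna : ¬ G.Adj u v),
      G.Adj (gg u v hu hv hne hna) v := by
    intro u v hu hv hne hna
    have h := hgr u v hu hv hne hna
    rw [hr, Finset.mem_filter] at h
    exact (h.2 v (Sym2.mem_mk_right u v)).symm
  have hgT : ∀ (u v : V) (hu : u ∈ S) (hv : v ∈ S) (hne : u ≠ v) (hna : ¬ G.Adj u v),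
      gg u v hu hv hne hna ∉ T := by
    intro u v hu hv hne hna
    have h := hgr u v hu hv hne hna
    rw [hr, Finset.mem_filter] at h
    have := h.1
    rw [hW, Finset.mem_compl] at this
    exact this
  have hginj : ∀ (u v : V) (hu : u ∈ S) (hv : v ∈ S) (hne : u ≠ v) (hna : ¬ G.Adj u v)
      (u' v' : V) (hu' : u' ∈ S) (hv' : v' ∈ S) (hne' : u' ≠ v') (hna' : ¬ G.Adj u' v'),
      gg u v hu hv hne hna = gg u' v' hu' hv' hne' hna' → s(u, v) = s(u', v') := by
    intro u v hu hv hne hna u' v' hu' hv' hne' hna' h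
    exact congrArg Subtype.val (hfinj h)
  refine ⟨S, hTS, fun u v hu hv hne =>
    if hadj : G.Adj u v then SimpleGraph.Walk.cons hadj SimpleGraph.Walk.nil
    else SimpleGraph.Walk.cons (hadj1 u v hu hv hne hadj)
      (SimpleGraph.Walk.cons (hadj2 u v hu hv hne hadj) SimpleGraph.Walk.nil), ?_, ?_, ?_⟩
  · intro u v hu hv hne
    dsimp only
    split_ifs with hadj
    · simp [SimpleGraph.Walk.isPath_def, hne]
    · have h1 : u ≠ gg u v hu hv hne hadj := (hadj1 u v hu hv hne hadj).ne
      have h2 : gg u v hu hv hne hadj ≠ v := (hadj2 u v hu hv hne hadj).ne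
      simp [SimpleGraph.Walk.isPath_def, hne, h1, h2]
  · intro u v hu hv hne x hx hxT
    dsimp only at hx
    split_ifs at hx with hadj
    · simpa using hx
    · simp only [SimpleGraph.Walk.support_cons, SimpleGraph.Walk.support_nil,
        List.mem_cons, List.mem_singleton, List.not_mem_nil, or_false] at hx
      rcases hx with rfl | rfl | rfl
      · exact Or.inl rfl
      · exact absurd (hST hxT) (hgT u v hu hv hne hadj)
      · exact Or.inr rfl
  · intro u v hu hv hne u' v' hu' hv' hne' hsne x hx hxu hxv hx'
    dsimp only at hx hx'
    by_cases hadj : G.Adj u v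
    · rw [dif_pos hadj] at hx
      simp only [SimpleGraph.Walk.support_cons, SimpleGraph.Walk.support_nil,
        List.mem_cons, List.not_mem_nil, or_false] at hx
      rcases hx with rfl | rfl
      · exact absurd rfl hxu
      · exact absurd rfl hxv
    · rw [dif_neg hadj] at hx
      simp only [SimpleGraph.Walk.support_cons, SimpleGraph.Walk.support_nil,
        List.mem_cons, List.not_mem_nil, or_false] at hx
      by_cases hadj' : G.Adj u' v'
      · rw [dif_pos hadj'] at hx'
        simp only [SimpleGraph.Walk.support_cons, SimpleGraph.Walk.support_nil,
          List.mem_cons, List.not_mem_nil, or_false] at hx'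
        rcases hx' with rfl | rfl
        · exact Or.inl rfl
        · exact Or.inr rfl
      · rw [dif_neg hadj'] at hx'
        simp only [SimpleGraph.Walk.support_cons, SimpleGraph.Walk.support_nil,
          List.mem_cons, List.not_mem_nil, or_false] at hx'
        rcases hx with rfl | rfl | rfl
        · exact absurd rfl hxu
        · rcases hx' with rfl | heq | rfl
          · exact Or.inl rfl
          · exact absurd (hginj u v hu hv hne hadj u' v' hu' hv' hne' hadj' heq) hsne
          · exact Or.inr rfl
        · exact absurd rfl hxv

end AuxSubdivision

theorem subdivision_number_vs_tparam {V : Type*} [Fintype V] [DecidableEq V]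
    (G : SimpleGraph V) [DecidableRel G.Adj] (Δ : ℕ)
    (hdeg : ∀ v : V, Fintype.card V - Δ - 1 ≤ G.degree v) :
    tparam G - Δ ≤ subdivNum G ∧ subdivNum G ≤ tparam G := by
  classical
  have hbddT : BddAbove {t | ∃ T : Finset V, T.card = t ∧
      missingPairs G ↑T ≤ 2 * (Fintype.card V - t)} := by
    refine ⟨Fintype.card V, fun t ht => ?_⟩
    obtain ⟨T, hc, _⟩ := ht
    exact hc ▸ Finset.card_le_univ T
  have hbddS : BddAbove {h | HasKSubdivision G h} := by
    refine ⟨Fintype.card V, fun k hk => ?_⟩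
    obtain ⟨T, hc, _⟩ := hk
    exact hc ▸ Finset.card_le_univ T
  have h0T : 0 ∈ {t | ∃ T : Finset V, T.card = t ∧
      missingPairs G ↑T ≤ 2 * (Fintype.card V - t)} := by
    refine ⟨∅, Finset.card_empty, ?_⟩
    rw [missingPairs_eq]
    simp [MM]
  have h0S : (0 : ℕ) ∈ {h | HasKSubdivision G h} := by
    refine ⟨∅, Finset.card_empty,
      fun u v hu => (Finset.notMem_empty u hu).elim,
      fun u v hu => (Finset.notMem_empty u hu).elim,
      fun u v hu => (Finset.notMem_empty u hu).elim,
      fun u v hu => (Finset.notMem_empty u hu).elim⟩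
  constructor
  · rw [tsub_le_iff_right]
    unfold tparam
    refine csSup_le ⟨0, h0T⟩ ?_
    rintro t ⟨T, rfl, hmp⟩
    have h1 : (MM G T).card ≤ Tᶜ.card := by
      rw [missingPairs_eq] at hmp
      rw [Finset.card_compl]
      have := Finset.card_le_univ T
      omega
    obtain ⟨S, hTS, P, hP⟩ := lower_lemma G Δ hdeg T h1
    have h2 : S.card ≤ subdivNum G := le_csSup hbddS ⟨S, rfl, P, hP⟩
    omega
  · unfold subdivNum
    refine csSup_le ⟨0, h0S⟩ ?_
    intro k hk
    obtain ⟨T, hc, hMM⟩ := upper_lemma G hk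
    have hmem : k ∈ {t | ∃ T : Finset V, T.card = t ∧
        missingPairs G ↑T ≤ 2 * (Fintype.card V - t)} := by
      refine ⟨T, hc, ?_⟩
      rw [missingPairs_eq]
      omega
    exact le_csSup hbddT hmem
end

section
/- Let G be a graph on n ≥ t vertices such that every set of t vertices contains at least x non-adjacent pairs. Then some vertex of G has at least 2nx/t² non-neighbors. -/
open SimpleGraph

open Finset in
lemma count_supersets {V : Type*} [DecidableEq V] (s A : Finset V) (hA : A ⊆ s) (t : ℕ)
    (hAt : A.card ≤ t) :
    ((Finset.powersetCard t s).filter (fun T => A ⊆ T)).card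
      = (s.card - A.card).choose (t - A.card) := by
  rw [← Finset.card_sdiff_of_subset hA, ← Finset.card_powersetCard (t - A.card) (s \ A)]
  apply Finset.card_nbij' (fun T => T \ A) (fun S => S ∪ A)
  · intro T hT
    simp only [Finset.mem_coe, mem_filter, Finset.mem_powersetCard] at hT
    obtain ⟨⟨hTs, hTc⟩, hAT⟩ := hT
    rw [Finset.mem_coe, Finset.mem_powersetCard]
    exact ⟨Finset.sdiff_subset_sdiff hTs le_rfl, by rw [Finset.card_sdiff_of_subset hAT, hTc]⟩
  · intro S hS
    rw [Finset.mem_coe, Finset.mem_powersetCard] at hS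
    obtain ⟨hSs, hSc⟩ := hS
    have hdisj : Disjoint S A := Finset.disjoint_of_subset_left hSs sdiff_disjoint
    simp only [Finset.mem_coe, mem_filter, Finset.mem_powersetCard]
    refine ⟨⟨Finset.union_subset (hSs.trans (Finset.sdiff_subset)) hA, ?_⟩,
      Finset.subset_union_right⟩
    rw [Finset.card_union_of_disjoint hdisj, hSc]
    omega
  · intro T hT
    simp only [Finset.mem_coe, mem_filter] at hT
    exact Finset.sdiff_union_of_subset hT.2
  · intro S hS
    rw [Finset.mem_coe, Finset.mem_powersetCard] at hS
    have hdisj : Disjoint S A := Finset.disjoint_of_subset_left hS.1 sdiff_disjoint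
    exact Finset.union_sdiff_cancel_right hdisj


open Finset in
theorem large_missing_degree_of_locally_missing {V : Type*} [Fintype V] [DecidableEq V]
    (G : SimpleGraph V) [DecidableRel G.Adj] (n t x : ℕ)
    (hn : Fintype.card V = n) (ht1 : 1 ≤ t) (ht : t ≤ n)
    (hx : ∀ T : Finset V, T.card = t → 2 * x ≤ missingPairs G ↑T) :
    ∃ v : V, 2 * (n : ℝ) * x / (t : ℝ) ^ 2 ≤ (Gᶜ.degree v : ℝ) := by
  have hV : Nonempty V := by
    rw [← Fintype.card_pos_iff, hn]; omega
  obtain ⟨v0⟩ := hV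
  -- case t = 1 : x = 0
  rcases eq_or_lt_of_le ht1 with h1 | ht2
  · have hx0 : x = 0 := by
      have := hx {v0} (by simp [← h1])
      have h0 : missingPairs G ({v0} : Finset V) = 0 := by
        unfold missingPairs
        rw [Set.ncard_eq_zero]
        ext p
        simp only [Finset.coe_singleton, Set.mem_setOf_eq, Set.mem_empty_iff_false, iff_false]
        rintro ⟨hp1, hp2, hne, -⟩
        exact hne (hp1.trans hp2.symm)
      rw [h0] at this
      omega
    exact ⟨v0, by simp [hx0, div_nonneg]⟩
  -- now 2 ≤ t
  replace ht2 : 2 ≤ t := ht2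
  classical
  set N : Finset (V × V) :=
    Finset.univ.filter (fun p : V × V => p.1 ≠ p.2 ∧ ¬ G.Adj p.1 p.2) with hN
  -- missingPairs as finset card
  have hmp : ∀ T : Finset V, missingPairs G ↑T
      = (N.filter (fun p => p.1 ∈ T ∧ p.2 ∈ T)).card := by
    intro T
    unfold missingPairs
    rw [show {p : V × V | p.1 ∈ (T : Set V) ∧ p.2 ∈ (T : Set V) ∧ p.1 ≠ p.2 ∧ ¬ G.Adj p.1 p.2}
        = ↑(N.filter (fun p => p.1 ∈ T ∧ p.2 ∈ T)) by
      ext p; simp [hN]; tauto]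
    exact Set.ncard_coe_finset _
  -- double counting
  set 𝒯 := Finset.powersetCard t (Finset.univ : Finset V) with h𝒯
  have hswap : ∑ T ∈ 𝒯, (N.filter (fun p => p.1 ∈ T ∧ p.2 ∈ T)).card
      = ∑ p ∈ N, (𝒯.filter (fun T => p.1 ∈ T ∧ p.2 ∈ T)).card := by
    simp_rw [Finset.card_filter]
    exact Finset.sum_comm
  -- each pair is in choose (n-2) (t-2) many T's
  have hcount : ∀ p ∈ N, (𝒯.filter (fun T => p.1 ∈ T ∧ p.2 ∈ T)).card
      = (n - 2).choose (t - 2) := by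
    intro p hp
    simp only [hN, mem_filter] at hp
    have hne : p.1 ≠ p.2 := hp.2.1
    have : (𝒯.filter (fun T => p.1 ∈ T ∧ p.2 ∈ T))
        = (𝒯.filter (fun T => ({p.1, p.2} : Finset V) ⊆ T)) := by
      apply Finset.filter_congr; intro T _; simp [Finset.insert_subset_iff]
    rw [this, h𝒯, count_supersets _ _ (Finset.subset_univ _) t
      (by rw [Finset.card_pair hne]; omega)]
    rw [Finset.card_univ, hn, Finset.card_pair hne]
  -- lower bound on the sum
  have hlow : 2 * x * n.choose t ≤ N.card * (n - 2).choose (t - 2) := by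
    calc 2 * x * n.choose t = ∑ T ∈ 𝒯, 2 * x := by
          rw [Finset.sum_const, h𝒯, Finset.card_powersetCard, Finset.card_univ, hn,
            smul_eq_mul, mul_comm]
      _ ≤ ∑ T ∈ 𝒯, (N.filter (fun p => p.1 ∈ T ∧ p.2 ∈ T)).card := by
          apply Finset.sum_le_sum
          intro T hT
          rw [h𝒯, Finset.mem_powersetCard_univ] at hT
          rw [← hmp]
          exact hx T hT
      _ = ∑ p ∈ N, (𝒯.filter (fun T => p.1 ∈ T ∧ p.2 ∈ T)).card := hswap
      _ = N.card * (n - 2).choose (t - 2) := by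
          rw [Finset.sum_congr rfl hcount, Finset.sum_const, smul_eq_mul]
  -- N.card = sum of complement degrees
  have hNcard : N.card = ∑ v : V, Gᶜ.degree v := by
    rw [Finset.card_eq_sum_card_fiberwise (f := fun p : V × V => p.1)
      (t := Finset.univ) (fun p _ => Finset.mem_univ _)]
    apply Finset.sum_congr rfl
    intro v _
    rw [SimpleGraph.degree]
    apply Finset.card_nbij' (fun p => p.2) (fun u => (v, u))
    · intro p hp
      simp only [Finset.mem_coe, hN, mem_filter, Finset.mem_filter] at hp
      obtain ⟨⟨-, hne, hadj⟩, h1⟩ := hp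
      rw [Finset.mem_coe, SimpleGraph.mem_neighborFinset, SimpleGraph.compl_adj]
      subst h1
      exact ⟨hne, hadj⟩
    · intro u hu
      rw [Finset.mem_coe, SimpleGraph.mem_neighborFinset, SimpleGraph.compl_adj] at hu
      simp only [Finset.mem_coe, hN, mem_filter, Finset.mem_filter, Finset.mem_univ, true_and]
      exact ⟨⟨hu.1, hu.2⟩, trivial⟩
    · intro p hp
      simp only [Finset.mem_coe, mem_filter] at hp
      rw [← hp.2]
    · intro u hu
      rfl
  -- take a vertex of max complement degree
  obtain ⟨v, -, hv⟩ := Finset.exists_max_image (Finset.univ : Finset V) (fun v => Gᶜ.degree v)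
    ⟨v0, Finset.mem_univ v0⟩
  have hsum_le : ∑ w : V, Gᶜ.degree w ≤ n * Gᶜ.degree v := by
    calc ∑ w : V, Gᶜ.degree w ≤ ∑ _w : V, Gᶜ.degree v :=
          Finset.sum_le_sum (fun w _ => hv w (Finset.mem_univ w))
      _ = n * Gᶜ.degree v := by rw [Finset.sum_const, Finset.card_univ, hn, smul_eq_mul]
  -- binomial identity
  have hchoose : n.choose t * (t * (t - 1)) = n * ((n - 1) * (n - 2).choose (t - 2)) := by
    obtain ⟨m, hm⟩ : ∃ m, n = m + 1 := ⟨n - 1, by omega⟩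
    obtain ⟨k, hk⟩ : ∃ k, t = k + 1 := ⟨t - 1, by omega⟩
    obtain ⟨m', hm'⟩ : ∃ m', m = m' + 1 := ⟨m - 1, by omega⟩
    obtain ⟨k', hk'⟩ : ∃ k', k = k' + 1 := ⟨k - 1, by omega⟩
    subst hm hk hm' hk'
    have h1 := Nat.add_one_mul_choose_eq (m' + 1) (k' + 1)
    have h2 := Nat.add_one_mul_choose_eq m' k'
    have e1 : m' + 1 + 1 - 1 = m' + 1 := rfl
    have e2 : k' + 1 + 1 - 1 = k' + 1 := rfl
    have e3 : m' + 1 + 1 - 2 = m' := rfl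
    have e4 : k' + 1 + 1 - 2 = k' := rfl
    rw [e1, e2, e3, e4]
    calc (m' + 1 + 1).choose (k' + 1 + 1) * ((k' + 1 + 1) * (k' + 1))
        = ((m' + 1 + 1).choose (k' + 1 + 1) * (k' + 1 + 1)) * (k' + 1) := by ring
      _ = ((m' + 1 + 1) * (m' + 1).choose (k' + 1)) * (k' + 1) := by rw [h1.symm]
      _ = (m' + 1 + 1) * ((m' + 1).choose (k' + 1) * (k' + 1)) := by ring
      _ = (m' + 1 + 1) * ((m' + 1) * m'.choose k') := by rw [h2.symm]
  -- combine into nat inequality 2*x*(n-1) ≤ deg v * (t*(t-1))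
  set D := Gᶜ.degree v with hD
  have hC : 0 < (n - 2).choose (t - 2) := Nat.choose_pos (by omega)
  have key : 2 * x * (n - 1) ≤ D * (t * (t - 1)) := by
    have h3 : 2 * x * n.choose t * (t * (t - 1)) ≤ n * D * (t * (t - 1)) * (n - 2).choose (t - 2) := by
      calc 2 * x * n.choose t * (t * (t - 1))
          ≤ N.card * (n - 2).choose (t - 2) * (t * (t - 1)) :=
            Nat.mul_le_mul_right _ hlow
        _ ≤ n * D * (n - 2).choose (t - 2) * (t * (t - 1)) := by
            apply Nat.mul_le_mul_right
            apply Nat.mul_le_mul_right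
            rw [hNcard]; exact hsum_le
        _ = n * D * (t * (t - 1)) * (n - 2).choose (t - 2) := by ring
    rw [show 2 * x * n.choose t * (t * (t - 1)) = 2 * x * (n.choose t * (t * (t - 1))) by ring,
      hchoose] at h3
    have h4 : 2 * x * (n * ((n - 1) * (n - 2).choose (t - 2)))
        = (2 * x * (n - 1)) * n * (n - 2).choose (t - 2) := by ring
    rw [h4] at h3
    have h5 : (2 * x * (n - 1)) * n ≤ n * D * (t * (t - 1)) :=
      Nat.le_of_mul_le_mul_right h3 hC
    have hn1 : 0 < n := by omega
    have h6 : (2 * x * (n - 1)) * n = n * (2 * x * (n - 1)) := by ring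
    rw [h6, show n * D * (t * (t - 1)) = n * (D * (t * (t - 1))) by ring] at h5
    exact Nat.le_of_mul_le_mul_left h5 hn1
  -- from 2x(n-1) ≥ ? to 2nx ≤ D t²  (using t ≤ n:  n(t-1) ≤ (n-1)t)
  have key2 : 2 * n * x ≤ D * (t * t) := by
    have h7 : 2 * n * x * (t - 1) ≤ 2 * x * (n - 1) * t := by
      have : n * (t - 1) ≤ (n - 1) * t := by
        have hA : n * (t - 1) = n * t - n := by
          rw [← Nat.pred_eq_sub_one, Nat.mul_pred]
        have hB : (n - 1) * t = n * t - t := by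
          rw [← Nat.pred_eq_sub_one, Nat.pred_mul]
        rw [hA, hB]
        omega
      calc 2 * n * x * (t - 1) = 2 * x * (n * (t - 1)) := by ring
        _ ≤ 2 * x * ((n - 1) * t) := Nat.mul_le_mul_left _ this
        _ = 2 * x * (n - 1) * t := by ring
    have h8 : 2 * x * (n - 1) * t ≤ D * (t * (t - 1)) * t := Nat.mul_le_mul_right _ key
    have h9 : 2 * n * x * (t - 1) ≤ D * (t * t) * (t - 1) := by
      calc 2 * n * x * (t - 1) ≤ D * (t * (t - 1)) * t := le_trans h7 h8
        _ = D * (t * t) * (t - 1) := by ring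
    exact Nat.le_of_mul_le_mul_right h9 (by omega)
  -- conclude over ℝ
  refine ⟨v, ?_⟩
  have ht0 : (0 : ℝ) < (t : ℝ) ^ 2 := by positivity
  rw [div_le_iff₀ ht0]
  have := key2
  have hcast : (2 * n * x : ℕ) ≤ (D * (t * t) : ℕ) := key2
  calc 2 * (n : ℝ) * x = ((2 * n * x : ℕ) : ℝ) := by push_cast; ring
    _ ≤ ((D * (t * t) : ℕ) : ℝ) := Nat.cast_le.mpr hcast
    _ = (D : ℝ) * (t : ℝ) ^ 2 := by push_cast; ring
end

section
/- Let D be a positive integer and let H be a graph on t vertices with at least x non-adjacent pairs, such that every vertex has at most D non-neighbors. Then the number of cliques of H (including the empty clique) is at most 2^{t - x/D} · (1 + 2^{-1/D})^{x/D}. -/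
open SimpleGraph

open Finset

set_option linter.unusedSectionVars false

section Aux
variable {V : Type*} [Fintype V] [DecidableEq V] (G : SimpleGraph V) [DecidableRel G.Adj]

def ccAux (A : Finset V) : ℕ :=
  (A.powerset.filter (fun s : Finset V => G.IsClique (s : Set V))).card

def pairsIn (A : Finset V) : ℕ :=
  ((A ×ˢ A).filter (fun p => Gᶜ.Adj p.1 p.2)).card

lemma ccAux_le_pow (A : Finset V) : ccAux G A ≤ 2 ^ A.card := by
  calc ccAux G A ≤ A.powerset.card := Finset.card_filter_le _ _
  _ = 2 ^ A.card := Finset.card_powerset A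

lemma cliqueCount_eq : cliqueCount G = ccAux G Finset.univ := by
  unfold cliqueCount ccAux
  rw [show {s : Finset V | G.IsClique (s : Set V)} =
    ↑(Finset.univ.powerset.filter (fun s : Finset V => G.IsClique (s : Set V))) by
    ext s; simp [Finset.mem_filter]]
  exact Set.ncard_coe_finset _

lemma missingPairs_eq_s12 : missingPairs G Set.univ = pairsIn G Finset.univ := by
  unfold missingPairs pairsIn
  rw [show {p : V × V | p.1 ∈ Set.univ ∧ p.2 ∈ Set.univ ∧ p.1 ≠ p.2 ∧ ¬ G.Adj p.1 p.2} =
    ↑((Finset.univ ×ˢ Finset.univ).filter (fun p : V × V => Gᶜ.Adj p.1 p.2)) by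
    ext p; simp [Finset.mem_filter, compl_adj]]
  exact Set.ncard_coe_finset _

end Aux

set_option linter.unusedSectionVars false

section Aux2
variable {V : Type*} [Fintype V] [DecidableEq V] (G : SimpleGraph V) [DecidableRel G.Adj]

lemma ccAux_le_three_mul {A : Finset V} {u v : V} (hu : u ∈ A) (hv : v ∈ A)
    (hne : u ≠ v) (hnadj : ¬ G.Adj u v) :
    ccAux G A ≤ 3 * ccAux G (A \ {u, v}) := by
  classical
  set f : Finset V → Finset V := fun s => s \ {u, v} with hf
  set S := A.powerset.filter (fun s : Finset V => G.IsClique (s : Set V)) with hS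
  have himg : S.image f ⊆
      (A \ {u, v}).powerset.filter (fun s : Finset V => G.IsClique (s : Set V)) := by
    intro b hb
    simp only [Finset.mem_image] at hb
    obtain ⟨s, hs, rfl⟩ := hb
    simp only [hS, Finset.mem_filter, Finset.mem_powerset] at hs ⊢
    constructor
    · exact Finset.sdiff_subset_sdiff hs.1 le_rfl
    · exact hs.2.subset (Finset.coe_subset.mpr Finset.sdiff_subset)
  have hfib : ∀ b ∈ S.image f, (S.filter (fun s => f s = b)).card ≤ 3 := by
    intro b _
    have hsub : S.filter (fun s => f s = b) ⊆ {b, insert u b, insert v b} := by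
      intro t ht
      simp only [Finset.mem_filter, hS, Finset.mem_powerset] at ht
      obtain ⟨⟨htA, htc⟩, hfb⟩ := ht
      simp only [Finset.mem_insert, Finset.mem_singleton]
      by_cases htu : u ∈ t <;> by_cases htv : v ∈ t
      · exact absurd (htc (Finset.mem_coe.mpr htu) (Finset.mem_coe.mpr htv) hne) hnadj
      · refine Or.inr (Or.inl ?_)
        rw [← hfb]
        ext w
        simp only [f, Finset.mem_insert, Finset.mem_sdiff, Finset.mem_singleton, not_or]
        constructor
        · intro hw
          by_cases hwu : w = u
          · exact Or.inl hwu
          · exact Or.inr ⟨hw, hwu, fun hwv => htv (hwv ▸ hw)⟩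
        · rintro (rfl | ⟨hw, -, -⟩)
          · exact htu
          · exact hw
      · refine Or.inr (Or.inr ?_)
        rw [← hfb]
        ext w
        simp only [f, Finset.mem_insert, Finset.mem_sdiff, Finset.mem_singleton, not_or]
        constructor
        · intro hw
          by_cases hwv : w = v
          · exact Or.inl hwv
          · exact Or.inr ⟨hw, fun hwu => htu (hwu ▸ hw), hwv⟩
        · rintro (rfl | ⟨hw, -, -⟩)
          · exact htv
          · exact hw
      · refine Or.inl ?_
        rw [← hfb]
        ext w
        simp only [f, Finset.mem_sdiff, Finset.mem_insert, Finset.mem_singleton, not_or]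
        exact ⟨fun hw => ⟨hw, fun h => htu (h ▸ hw), fun h => htv (h ▸ hw)⟩, fun h => h.1⟩
    have h3 : ({b, insert u b, insert v b} : Finset (Finset V)).card ≤ 3 := by
      have c1 := Finset.card_insert_le b ({insert u b, insert v b} : Finset (Finset V))
      have c2 := Finset.card_insert_le (insert u b) ({insert v b} : Finset (Finset V))
      have c3 : ({insert v b} : Finset (Finset V)).card = 1 := Finset.card_singleton _
      omega
    exact (Finset.card_le_card hsub).trans h3
  calc ccAux G A = S.card := rfl
  _ ≤ 3 * (S.image f).card := Finset.card_le_mul_card_image S 3 hfib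
  _ ≤ 3 * ccAux G (A \ {u, v}) := Nat.mul_le_mul_left 3 (Finset.card_le_card himg)

lemma pairsIn_le_del {A : Finset V} {u v : V} {D : ℕ}
    (hdeg : ∀ w : V, Gᶜ.degree w ≤ D) (hD : 1 ≤ D)
    (hu : u ∈ A) (hv : v ∈ A) (huv : Gᶜ.Adj u v) :
    pairsIn G A ≤ pairsIn G (A \ {u, v}) + (4 * D - 2) := by
  classical
  set B := A \ {u, v} with hB
  set P := (A ×ˢ A).filter (fun p : V × V => Gᶜ.Adj p.1 p.2) with hP
  set P' := (B ×ˢ B).filter (fun p : V × V => Gᶜ.Adj p.1 p.2) with hP'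
  set T := P.filter (fun p : V × V => p.1 = u ∨ p.1 = v ∨ p.2 = u ∨ p.2 = v) with hT
  have hsub : P ⊆ P' ∪ T := by
    intro p hp
    by_cases h : p.1 = u ∨ p.1 = v ∨ p.2 = u ∨ p.2 = v
    · exact Finset.mem_union_right _ (Finset.mem_filter.mpr ⟨hp, h⟩)
    · push_neg at h
      refine Finset.mem_union_left _ ?_
      simp only [hP, Finset.mem_filter, Finset.mem_product] at hp
      simp only [hP', Finset.mem_filter, Finset.mem_product, hB, Finset.mem_sdiff,
        Finset.mem_insert, Finset.mem_singleton, not_or]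
      exact ⟨⟨⟨hp.1.1, h.1, h.2.1⟩, hp.1.2, h.2.2.1, h.2.2.2⟩, hp.2⟩
  set T1 := T.filter (fun p : V × V => p.1 = u) with hT1
  set T2 := T.filter (fun p : V × V => p.1 = v) with hT2
  set T3 := T.filter (fun p : V × V => p.2 = u) with hT3
  set T4 := T.filter (fun p : V × V => p.2 = v) with hT4
  have hTsub : T ⊆ (T1 ∪ T4) ∪ (T2 ∪ T3) := by
    intro p hp
    have hp' := Finset.mem_filter.mp hp
    rcases hp'.2 with h | h | h | h
    · exact Finset.mem_union_left _ (Finset.mem_union_left _ (Finset.mem_filter.mpr ⟨hp, h⟩))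
    · exact Finset.mem_union_right _ (Finset.mem_union_left _ (Finset.mem_filter.mpr ⟨hp, h⟩))
    · exact Finset.mem_union_right _ (Finset.mem_union_right _ (Finset.mem_filter.mpr ⟨hp, h⟩))
    · exact Finset.mem_union_left _ (Finset.mem_union_right _ (Finset.mem_filter.mpr ⟨hp, h⟩))
  have hadjmem : ∀ p : V × V, p ∈ T → Gᶜ.Adj p.1 p.2 := fun p hp =>
    (Finset.mem_filter.mp (Finset.mem_filter.mp hp).1).2
  have hcard1 : T1.card ≤ D := by
    have h1 : T1.card ≤ (Gᶜ.neighborFinset u).card := by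
      apply Finset.card_le_card_of_injOn Prod.snd
      · intro p hp
        have h1 := (Finset.mem_filter.mp hp).2
        have h2 := hadjmem p (Finset.mem_filter.mp hp).1
        rw [Finset.mem_coe, SimpleGraph.mem_neighborFinset]
        exact h1 ▸ h2
      · intro p hp q hq hpq
        have h1 := (Finset.mem_filter.mp hp).2
        have h2 := (Finset.mem_filter.mp hq).2
        exact Prod.ext (h1.trans h2.symm) hpq
    rw [SimpleGraph.card_neighborFinset_eq_degree] at h1
    exact h1.trans (hdeg u)
  have hcard2 : T2.card ≤ D := by
    have h1 : T2.card ≤ (Gᶜ.neighborFinset v).card := by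
      apply Finset.card_le_card_of_injOn Prod.snd
      · intro p hp
        have h1 := (Finset.mem_filter.mp hp).2
        have h2 := hadjmem p (Finset.mem_filter.mp hp).1
        rw [Finset.mem_coe, SimpleGraph.mem_neighborFinset]
        exact h1 ▸ h2
      · intro p hp q hq hpq
        have h1 := (Finset.mem_filter.mp hp).2
        have h2 := (Finset.mem_filter.mp hq).2
        exact Prod.ext (h1.trans h2.symm) hpq
    rw [SimpleGraph.card_neighborFinset_eq_degree] at h1
    exact h1.trans (hdeg v)
  have hcard3 : T3.card ≤ D := by
    have h1 : T3.card ≤ (Gᶜ.neighborFinset u).card := by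
      apply Finset.card_le_card_of_injOn Prod.fst
      · intro p hp
        have h1 := (Finset.mem_filter.mp hp).2
        have h2 := hadjmem p (Finset.mem_filter.mp hp).1
        rw [Finset.mem_coe, SimpleGraph.mem_neighborFinset]
        exact (h1 ▸ h2).symm
      · intro p hp q hq hpq
        have h1 := (Finset.mem_filter.mp hp).2
        have h2 := (Finset.mem_filter.mp hq).2
        exact Prod.ext hpq (h1.trans h2.symm)
    rw [SimpleGraph.card_neighborFinset_eq_degree] at h1
    exact h1.trans (hdeg u)
  have hcard4 : T4.card ≤ D := by
    have h1 : T4.card ≤ (Gᶜ.neighborFinset v).card := by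
      apply Finset.card_le_card_of_injOn Prod.fst
      · intro p hp
        have h1 := (Finset.mem_filter.mp hp).2
        have h2 := hadjmem p (Finset.mem_filter.mp hp).1
        rw [Finset.mem_coe, SimpleGraph.mem_neighborFinset]
        exact (h1 ▸ h2).symm
      · intro p hp q hq hpq
        have h1 := (Finset.mem_filter.mp hp).2
        have h2 := (Finset.mem_filter.mp hq).2
        exact Prod.ext hpq (h1.trans h2.symm)
    rw [SimpleGraph.card_neighborFinset_eq_degree] at h1
    exact h1.trans (hdeg v)
  have hmemuv : (u, v) ∈ T1 ∩ T4 := by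
    have hTm : (u, v) ∈ T := by
      refine Finset.mem_filter.mpr ⟨Finset.mem_filter.mpr ⟨?_, huv⟩, Or.inl rfl⟩
      exact Finset.mem_product.mpr ⟨hu, hv⟩
    exact Finset.mem_inter.mpr ⟨Finset.mem_filter.mpr ⟨hTm, rfl⟩,
      Finset.mem_filter.mpr ⟨hTm, rfl⟩⟩
  have hmemvu : (v, u) ∈ T2 ∩ T3 := by
    have hTm : (v, u) ∈ T := by
      refine Finset.mem_filter.mpr ⟨Finset.mem_filter.mpr ⟨?_, huv.symm⟩, Or.inr (Or.inl rfl)⟩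
      exact Finset.mem_product.mpr ⟨hv, hu⟩
    exact Finset.mem_inter.mpr ⟨Finset.mem_filter.mpr ⟨hTm, rfl⟩,
      Finset.mem_filter.mpr ⟨hTm, rfl⟩⟩
  have hu14 := Finset.card_union_add_card_inter T1 T4
  have hu23 := Finset.card_union_add_card_inter T2 T3
  have hi14 : 1 ≤ (T1 ∩ T4).card := Finset.card_pos.mpr ⟨_, hmemuv⟩
  have hi23 : 1 ≤ (T2 ∩ T3).card := Finset.card_pos.mpr ⟨_, hmemvu⟩
  have hTcard : T.card ≤ 4 * D - 2 := by
    have h1 := Finset.card_le_card hTsub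
    have h2 := Finset.card_union_le (T1 ∪ T4) (T2 ∪ T3)
    omega
  calc pairsIn G A = P.card := rfl
  _ ≤ (P' ∪ T).card := Finset.card_le_card hsub
  _ ≤ P'.card + T.card := Finset.card_union_le _ _
  _ ≤ pairsIn G B + (4 * D - 2) := Nat.add_le_add le_rfl hTcard

end Aux2

section Main
variable {V : Type*} [Fintype V] [DecidableEq V] (G : SimpleGraph V) [DecidableRel G.Adj]

lemma main_bound (D : ℕ) (hD : 1 ≤ D) (hdeg : ∀ w : V, Gᶜ.degree w ≤ D) :
    ∀ (m : ℕ) (A : Finset V), m * (4 * D - 2) < pairsIn G A + (4 * D - 2) →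
      (ccAux G A : ℝ) * 4 ^ m ≤ 3 ^ m * 2 ^ A.card := by
  intro m
  induction m with
  | zero =>
    intro A _
    simp only [pow_zero, mul_one, one_mul]
    exact_mod_cast ccAux_le_pow G A
  | succ m ih =>
    intro A hA
    rw [add_one_mul] at hA
    have hpos : 0 < pairsIn G A := by omega
    obtain ⟨p, hp⟩ := Finset.card_pos.mp hpos
    have hp' := Finset.mem_filter.mp hp
    have hpA := Finset.mem_product.mp hp'.1
    obtain ⟨hne, hnadj⟩ := (SimpleGraph.compl_adj G p.1 p.2).mp hp'.2
    set u := p.1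
    set v := p.2
    set B := A \ {u, v} with hB
    have hpairs := pairsIn_le_del G hdeg hD hpA.1 hpA.2 hp'.2
    have h3 := ccAux_le_three_mul G hpA.1 hpA.2 hne hnadj
    rw [← hB] at hpairs h3
    have hcardB : A.card = B.card + 2 := by
      have hsub : ({u, v} : Finset V) ⊆ A := by
        intro w hw
        rcases Finset.mem_insert.mp hw with rfl | hw
        · exact hpA.1
        · exact (Finset.mem_singleton.mp hw) ▸ hpA.2
      have h2 : ({u, v} : Finset V).card = 2 := Finset.card_pair hne
      have h4 := Finset.card_sdiff_of_subset hsub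
      have hle := Finset.card_le_card hsub
      rw [h2] at h4 hle
      rw [hB, h4]
      omega
    have ihB : (ccAux G B : ℝ) * 4 ^ m ≤ 3 ^ m * 2 ^ B.card := by
      apply ih
      omega
    have h3' : (ccAux G A : ℝ) ≤ 3 * ccAux G B := by exact_mod_cast h3
    calc (ccAux G A : ℝ) * 4 ^ (m + 1)
        ≤ (3 * ccAux G B : ℝ) * 4 ^ (m + 1) := by
          apply mul_le_mul_of_nonneg_right h3' (by positivity)
      _ = 12 * ((ccAux G B : ℝ) * 4 ^ m) := by push_cast; ring
      _ ≤ 12 * (3 ^ m * 2 ^ B.card) := by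
          apply mul_le_mul_of_nonneg_left ihB (by norm_num)
      _ = 3 ^ (m + 1) * 2 ^ A.card := by rw [hcardB]; try ring

end Main

lemma rpow_neg_one_div_pow (k : ℕ) (hk : k ≠ 0) :
    ((2:ℝ) ^ (-(1:ℝ) / (k:ℝ))) ^ k = 1/2 := by
  have hk' : ((k:ℝ)) ≠ 0 := Nat.cast_ne_zero.mpr hk
  rw [← Real.rpow_natCast ((2:ℝ) ^ (-(1:ℝ)/(k:ℝ))) k,
    ← Real.rpow_mul (by norm_num : (0:ℝ) ≤ 2)]
  rw [show (-(1:ℝ)/(k:ℝ)) * (k:ℝ) = -1 by field_simp]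
  rw [show (-1:ℝ) = ((-1:ℤ):ℝ) by norm_num, Real.rpow_intCast]
  norm_num

lemma rpow_neg_one_div_pos (k : ℕ) : 0 < (2:ℝ) ^ (-(1:ℝ) / (k:ℝ)) :=
  Real.rpow_pos_of_pos (by norm_num) _

lemma rpow_neg_one_div_le_one (k : ℕ) : (2:ℝ) ^ (-(1:ℝ) / (k:ℝ)) ≤ 1 := by
  apply Real.rpow_le_one_of_one_le_of_nonpos (by norm_num)
  apply div_nonpos_of_nonpos_of_nonneg (by norm_num) (by positivity)

/-- core numeric inequality -/
lemma ki_core (D : ℕ) (hD : 1 ≤ D) :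
    ((3 : ℝ) / 4) ^ ((D : ℕ) : ℝ) ≤
      ((1 + (2 : ℝ) ^ (-(1 : ℝ) / (D : ℝ))) / 2) ^ (((2 * D - 1 : ℕ)) : ℝ) := by
  rw [Real.rpow_natCast, Real.rpow_natCast]
  match D, hD with
  | 1, _ =>
    have hb := rpow_neg_one_div_pow 1 one_ne_zero
    rw [pow_one] at hb
    rw [hb]
    norm_num
  | 2, _ =>
    set b : ℝ := (2:ℝ) ^ (-(1:ℝ)/((2:ℕ):ℝ)) with hbdef
    have hbpos : 0 < b := rpow_neg_one_div_pos 2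
    have hb2 : b ^ 2 = 1/2 := rpow_neg_one_div_pow 2 (by norm_num)
    have hbge : (7/10:ℝ) ≤ b := by
      by_contra h
      push_neg at h
      have h3 := pow_lt_pow_left₀ h hbpos.le (two_ne_zero)
      rw [hb2] at h3
      norm_num at h3
    have hb3 : b ^ 3 = (1/2) * b := by
      rw [pow_succ, hb2]
    norm_num
    nlinarith [hb2, hb3, hbge, hbpos]
  | (n+3), _ =>
    set d : ℕ := n + 3 with hd
    set b : ℝ := (2:ℝ) ^ (-(1:ℝ)/(d:ℝ)) with hbdef
    have hbpos : 0 < b := rpow_neg_one_div_pos d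
    have hble1 : b ≤ 1 := rpow_neg_one_div_le_one d
    set a : ℝ := (2:ℝ) ^ (-(1:ℝ)/((3:ℕ):ℝ)) with hadef
    have hapos : 0 < a := rpow_neg_one_div_pos 3
    have ha3 : a ^ 3 = 1/2 := rpow_neg_one_div_pow 3 (by norm_num)
    have hage : (79/100:ℝ) ≤ a := by
      by_contra h
      push_neg at h
      have h3 := pow_lt_pow_left₀ h hapos.le (three_ne_zero)
      rw [ha3] at h3
      norm_num at h3
    have hd3 : (3:ℝ) ≤ (d:ℝ) := by
      have : (3:ℕ) ≤ d := by omega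
      exact_mod_cast this
    have hab : a ≤ b := by
      apply Real.rpow_le_rpow_of_exponent_le (by norm_num : (1:ℝ) ≤ 2)
      rw [neg_div, neg_div, neg_le_neg_iff,
        show ((3:ℕ):ℝ) = (3:ℝ) by norm_num]
      exact one_div_le_one_div_of_le (by norm_num) hd3
    have hsq : (3:ℝ)/4 ≤ ((1+b)/2)^2 := by nlinarith [hage, hab]
    have hc0 : (0:ℝ) ≤ (1+b)/2 := by linarith
    have hc1 : (1+b)/2 ≤ 1 := by linarith
    calc ((3:ℝ)/4) ^ d ≤ (((1+b)/2)^2)^d := pow_le_pow_left₀ (by norm_num) hsq d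
    _ = ((1+b)/2)^(2*d) := by rw [← pow_mul]
    _ ≤ ((1+b)/2)^(2*d-1) := pow_le_pow_of_le_one hc0 hc1 (by omega)


theorem clique_count_bound_dense {V : Type*} [Fintype V] [DecidableEq V]
    (G : SimpleGraph V) [DecidableRel G.Adj] (t x D : ℕ)
    (hD : 1 ≤ D) (ht : Fintype.card V = t)
    (hx : 2 * x ≤ missingPairs G Set.univ)
    (hdeg : ∀ v : V, Gᶜ.degree v ≤ D) :
    (cliqueCount G : ℝ) ≤
      (2 : ℝ) ^ ((t : ℝ) - (x : ℝ) / D) *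
        (1 + (2 : ℝ) ^ (-(1 : ℝ) / D)) ^ ((x : ℝ) / D) := by
  classical
  set m : ℕ := (x + (2 * D - 2)) / (2 * D - 1) with hm
  have hkpos : 0 < 2 * D - 1 := by omega
  have hdm := Nat.div_add_mod (x + (2 * D - 2)) (2 * D - 1)
  rw [← hm] at hdm
  have hmod := Nat.mod_lt (x + (2 * D - 2)) hkpos
  have hub : m * (2 * D - 1) ≤ x + (2 * D - 2) := Nat.div_mul_le_self _ _
  have hcomm : (2 * D - 1) * m = m * (2 * D - 1) := Nat.mul_comm _ _
  have hlb : x ≤ m * (2 * D - 1) := by omega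
  -- the condition for the main bound
  have hxp : 2 * x ≤ pairsIn G (Finset.univ : Finset V) := by
    rw [← missingPairs_eq_s12]; exact hx
  have hmul : m * (4 * D - 2) = 2 * (m * (2 * D - 1)) := by
    rw [show 4 * D - 2 = 2 * (2 * D - 1) from by omega]; ring
  have hcond : m * (4 * D - 2) < pairsIn G (Finset.univ : Finset V) + (4 * D - 2) := by
    omega
  have hmain := main_bound G D hD hdeg m Finset.univ hcond
  rw [← cliqueCount_eq, Finset.card_univ, ht] at hmain
  -- move to (3/4)^m * 2^t
  have h4pos : (0:ℝ) < 4 ^ m := by positivity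
  have hq : (cliqueCount G : ℝ) ≤ (3/4 : ℝ) ^ m * 2 ^ t := by
    rw [show (3/4 : ℝ) ^ m * 2 ^ t = 3 ^ m * 2 ^ t / 4 ^ m by rw [div_pow]; ring,
      le_div_iff₀ h4pos]
    exact hmain
  -- numeric comparison
  set c : ℝ := 1 + (2 : ℝ) ^ (-(1 : ℝ) / (D : ℝ)) with hc
  have hbpos : 0 < (2 : ℝ) ^ (-(1 : ℝ) / (D : ℝ)) := rpow_neg_one_div_pos D
  have hcpos : (0:ℝ) < c := by rw [hc]; linarith
  have hD0 : (0:ℝ) < (D:ℝ) := by exact_mod_cast hD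
  set K : ℝ := ((2 * D - 1 : ℕ):ℝ) with hK
  have hk0 : (0:ℝ) < K := by rw [hK]; exact_mod_cast hkpos
  have hDne : (D:ℝ) ≠ 0 := hD0.ne'
  have hKne : K ≠ 0 := hk0.ne'
  have hKI := ki_core D hD
  rw [← hK] at hKI
  have hexp0 : (0:ℝ) ≤ (x:ℝ) / ((D:ℝ) * K) := by positivity
  have hstep := Real.rpow_le_rpow (by positivity) hKI hexp0
  rw [← Real.rpow_mul (by norm_num : (0:ℝ) ≤ 3/4),
    ← Real.rpow_mul (by positivity : (0:ℝ) ≤ c / 2)] at hstep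
  rw [show ((D:ℕ):ℝ) * ((x:ℝ) / ((D:ℝ) * K)) = (x:ℝ) / K by
      field_simp] at hstep
  rw [show K * ((x:ℝ) / ((D:ℝ) * K)) = (x:ℝ) / ((D:ℝ)) by
      field_simp] at hstep
  -- (3/4)^m ≤ (3/4)^(x/(2D-1))
  have hexpm : (x:ℝ) / K ≤ (m:ℝ) := by
    rw [div_le_iff₀ hk0, hK]
    exact_mod_cast hlb
  have hmono : ((3:ℝ)/4) ^ ((m:ℕ):ℝ) ≤ (3/4 : ℝ) ^ ((x:ℝ) / K) :=
    Real.rpow_le_rpow_of_exponent_ge (by norm_num) (by norm_num) hexpm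
  rw [Real.rpow_natCast] at hmono
  have hfin : ((3:ℝ)/4) ^ m ≤ (c / 2) ^ ((x:ℝ) / (D:ℝ)) := hmono.trans hstep
  -- RHS rewriting
  have hRHS : (2 : ℝ) ^ ((t : ℝ) - (x : ℝ) / D) * c ^ ((x : ℝ) / D)
      = (c / 2) ^ ((x:ℝ) / (D:ℝ)) * 2 ^ (t : ℕ) := by
    rw [Real.rpow_sub (by norm_num : (0:ℝ) < 2),
      Real.div_rpow hcpos.le (by norm_num : (0:ℝ) ≤ 2),
      ← Real.rpow_natCast 2 t]
    ring
  rw [hRHS]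
  calc (cliqueCount G : ℝ) ≤ (3/4 : ℝ) ^ m * 2 ^ t := hq
  _ ≤ (c / 2) ^ ((x:ℝ) / (D:ℝ)) * 2 ^ t := by
      apply mul_le_mul_of_nonneg_right hfin (by positivity)
end

section
/- Let W be a maximum clique in a graph H on t vertices in which every vertex has at most D non-neighbors, let ω = |W|, and for each vertex v outside W let S_v ⊆ W be the set of non-neighbors of v in W. Then for every vertex v outside W, 1 ≤ |S_v| ≤ D, and the number of cliques of H is exactly the sum over cliques Q contained in V(H)\W of 2^{ω - |∪_{v∈Q} S_v|}. -/
open SimpleGraph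

theorem clique_count_decomposition {V : Type*} [Fintype V] [DecidableEq V]
    (G : SimpleGraph V) [DecidableRel G.Adj] (t D : ℕ)
    (ht : Fintype.card V = t)
    (hdeg : ∀ v : V, Gᶜ.degree v ≤ D)
    (W : Finset V) (hW : G.IsClique (W : Set V))
    (hmax : ∀ s : Finset V, G.IsClique (s : Set V) → s.card ≤ W.card)
    (S : V → Finset V) (hS : ∀ v : V, S v = W.filter fun w => ¬ G.Adj v w) :
    (∀ v : V, v ∉ W → 1 ≤ (S v).card ∧ (S v).card ≤ D) ∧
    cliqueCount G =
      ∑ Q ∈ Finset.univ.filter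
          (fun Q : Finset V => G.IsClique (Q : Set V) ∧ ∀ v ∈ Q, v ∉ W),
        2 ^ (W.card - (Q.biUnion S).card) := by
  classical
  have hSsub : ∀ v, S v ⊆ W := fun v => by rw [hS]; exact Finset.filter_subset _ _
  constructor
  · intro v hv
    constructor
    · rcases Finset.eq_empty_or_nonempty (S v) with he | hne
      · exfalso
        have hadj : ∀ w ∈ W, v ≠ w → G.Adj v w := by
          intro w hw _
          by_contra hna
          have : w ∈ S v := by rw [hS]; exact Finset.mem_filter.2 ⟨hw, hna⟩
          simp [he] at this
        have hcl : G.IsClique (insert v (W : Set V)) := hW.insert hadj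
        have := hmax (insert v W) (by rwa [Finset.coe_insert])
        rw [Finset.card_insert_of_notMem hv] at this
        omega
      · exact Finset.card_pos.2 hne
    · have hsub : S v ⊆ Gᶜ.neighborFinset v := by
        intro w hw
        rw [hS, Finset.mem_filter] at hw
        rw [SimpleGraph.mem_neighborFinset, SimpleGraph.compl_adj]
        exact ⟨fun h => hv (h ▸ hw.1), hw.2⟩
      calc (S v).card ≤ (Gᶜ.neighborFinset v).card := Finset.card_le_card hsub
        _ = Gᶜ.degree v := Gᶜ.card_neighborFinset_eq_degree v
        _ ≤ D := hdeg v
  · set A := Finset.univ.filter (fun s : Finset V => G.IsClique (s : Set V)) with hA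
    set B := Finset.univ.filter
        (fun Q : Finset V => G.IsClique (Q : Set V) ∧ ∀ v ∈ Q, v ∉ W) with hB
    have hcc : cliqueCount G = A.card := by
      rw [cliqueCount, Set.ncard_eq_toFinset_card']
      congr 1
      ext s
      simp [hA]
    rw [hcc]
    have hmap : ∀ s ∈ A, s \ W ∈ B := by
      intro s hs
      rw [hA, Finset.mem_filter] at hs
      rw [hB, Finset.mem_filter]
      refine ⟨Finset.mem_univ _, hs.2.subset ?_, fun v hv => (Finset.mem_sdiff.1 hv).2⟩
      intro x hx
      exact (Finset.mem_sdiff.1 hx).1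
    rw [Finset.card_eq_sum_card_fiberwise hmap]
    apply Finset.sum_congr rfl
    intro Q hQ
    rw [hB, Finset.mem_filter] at hQ
    obtain ⟨-, hQcl, hQW⟩ := hQ
    have hbU : Q.biUnion S ⊆ W := by
      intro x hx
      obtain ⟨v, -, hxv⟩ := Finset.mem_biUnion.1 hx
      exact hSsub v hxv
    have hcard : (A.filter fun s => s \ W = Q).card
        = ((W \ Q.biUnion S).powerset).card := by
      apply Finset.card_bij' (fun s _ => s ∩ W) (fun Q' _ => Q ∪ Q')
      · intro s hs
        rw [Finset.mem_filter, hA, Finset.mem_filter] at hs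
        obtain ⟨⟨-, hscl⟩, hsQ⟩ := hs
        rw [Finset.mem_powerset]
        intro w hw
        rw [Finset.mem_inter] at hw
        rw [Finset.mem_sdiff]
        refine ⟨hw.2, ?_⟩
        intro hwb
        obtain ⟨v, hvQ, hwS⟩ := Finset.mem_biUnion.1 hwb
        have hvs : v ∈ s := by
          have := hsQ ▸ hvQ
          exact (Finset.mem_sdiff.1 this).1
        have hvw : v ≠ w := fun h => hQW v hvQ (h ▸ hw.2)
        have hadj := hscl hvs hw.1 hvw
        rw [hS, Finset.mem_filter] at hwS
        exact hwS.2 hadj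
      · intro Q' hQ'
        rw [Finset.mem_powerset] at hQ'
        have hQ'W : Q' ⊆ W := hQ'.trans (Finset.sdiff_subset)
        rw [Finset.mem_filter, hA, Finset.mem_filter]
        have hcross : ∀ a ∈ Q, ∀ b ∈ Q', G.Adj a b := by
          intro a ha b hb
          have hbW := Finset.mem_sdiff.1 (hQ' hb)
          by_contra hna
          exact hbW.2 (Finset.mem_biUnion.2 ⟨a, ha,
            by rw [hS]; exact Finset.mem_filter.2 ⟨hbW.1, hna⟩⟩)
        refine ⟨⟨Finset.mem_univ _, ?_⟩, ?_⟩
        · intro x hx y hy hxy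
          simp only [Finset.coe_union, Set.mem_union, Finset.mem_coe] at hx hy
          rcases hx with hx | hx <;> rcases hy with hy | hy
          · exact hQcl hx hy hxy
          · exact hcross x hx y hy
          · exact (hcross y hy x hx).symm
          · exact hW (hQ'W hx) (hQ'W hy) hxy
        · ext x
          rw [Finset.mem_sdiff, Finset.mem_union]
          constructor
          · rintro ⟨hx | hx, hxW⟩
            · exact hx
            · exact absurd (hQ'W hx) hxW
          · intro hx
            exact ⟨Or.inl hx, hQW x hx⟩
      · intro s hs
        rw [Finset.mem_filter] at hs
        rw [← hs.2, Finset.sdiff_union_inter]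
      · intro Q' hQ'
        rw [Finset.mem_powerset] at hQ'
        have hQ'W : Q' ⊆ W := hQ'.trans (Finset.sdiff_subset)
        rw [Finset.union_inter_distrib_right]
        rw [Finset.inter_eq_left.2 hQ'W]
        have : Q ∩ W = ∅ := by
          ext x
          simp only [Finset.mem_inter, Finset.notMem_empty, iff_false]
          rintro ⟨hx, hxW⟩
          exact hQW x hx hxW
        rw [this, Finset.empty_union]
    rw [hcard, Finset.card_powerset, Finset.card_sdiff_of_subset hbU]
end

section
/- Let y_1, ..., y_k be reals with 1 ≤ y_i ≤ D and ∑ y_i = q, where k ≤ q ≤ kD. Then ∏_{i=1}^k (2^{-y_i/D} + 1) ≤ (2^{-1/D} + 1)^a · (3/2)^b, where a = (kD - q)/(D-1) and b = (q-k)/(D-1), assuming D > 1. -/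
open SimpleGraph

private lemma holder2_aux (x z t : ℝ) (hx : 0 < x) (hz : 0 < z) (h0 : 0 ≤ t) (h1 : t ≤ 1) :
    x ^ t * z ^ (1 - t) + 1 ≤ (x + 1) ^ t * (z + 1) ^ (1 - t) := by
  have hx1 : (0:ℝ) < x + 1 := by linarith
  have hz1 : (0:ℝ) < z + 1 := by linarith
  have ht' : (0:ℝ) ≤ 1 - t := by linarith
  have H1 := Real.geom_mean_le_arith_mean2_weighted h0 ht'
    (div_pos hx hx1).le (div_pos hz hz1).le (by ring)
  have H2 := Real.geom_mean_le_arith_mean2_weighted h0 ht'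
    (by positivity : (0:ℝ) ≤ 1 / (x + 1)) (by positivity : (0:ℝ) ≤ 1 / (z + 1)) (by ring)
  rw [Real.div_rpow hx.le hx1.le, Real.div_rpow hz.le hz1.le] at H1
  rw [Real.div_rpow zero_le_one hx1.le, Real.div_rpow zero_le_one hz1.le,
    Real.one_rpow, Real.one_rpow] at H2
  have hP : (0:ℝ) < (x + 1) ^ t * (z + 1) ^ (1 - t) := by positivity
  rw [← div_le_one hP]
  have hxt : (0:ℝ) < (x+1) ^ t := by positivity
  have hzt : (0:ℝ) < (z+1) ^ (1-t) := by positivity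
  calc (x ^ t * z ^ (1 - t) + 1) / ((x + 1) ^ t * (z + 1) ^ (1 - t))
      = x ^ t / (x+1) ^ t * (z ^ (1-t) / (z+1) ^ (1-t))
        + 1 / (x+1) ^ t * (1 / (z+1) ^ (1-t)) := by field_simp
    _ ≤ (t * (x / (x + 1)) + (1 - t) * (z / (z + 1)))
        + (t * (1 / (x + 1)) + (1 - t) * (1 / (z + 1))) := add_le_add H1 H2
    _ = t * ((x + 1) / (x + 1)) + (1 - t) * ((z + 1) / (z + 1)) := by ring
    _ = 1 := by rw [div_self hx1.ne', div_self hz1.ne']; ring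


theorem product_convexity_bound (k : ℕ) (D q : ℝ) (hD : 1 < D) (y : Fin k → ℝ)
    (hy : ∀ i, 1 ≤ y i ∧ y i ≤ D) (hsum : ∑ i, y i = q)
    (hq1 : (k : ℝ) ≤ q) (hq2 : q ≤ k * D) :
    ∏ i, ((2 : ℝ) ^ (-(y i) / D) + 1) ≤
      ((2 : ℝ) ^ (-(1 : ℝ) / D) + 1) ^ ((k * D - q) / (D - 1)) *
        ((3 : ℝ) / 2) ^ ((q - k) / (D - 1)) := by
  have hD1 : (0:ℝ) < D - 1 := by linarith
  have hD0 : (0:ℝ) < D := by linarith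
  set θ : Fin k → ℝ := fun i => (D - y i) / (D - 1) with hθ
  have hθ0 : ∀ i, 0 ≤ θ i := fun i => div_nonneg (by linarith [(hy i).2]) hD1.le
  have hθ1 : ∀ i, θ i ≤ 1 := fun i => by
    rw [hθ]; rw [div_le_one hD1]; linarith [(hy i).1]
  have hApos : (0:ℝ) < (2:ℝ) ^ (-(1:ℝ)/D) + 1 := by positivity
  have hBpos : (0:ℝ) < (3:ℝ)/2 := by norm_num
  have key : ∀ i, (2:ℝ) ^ (-(y i)/D) + 1 ≤
      ((2:ℝ) ^ (-(1:ℝ)/D) + 1) ^ (θ i) * ((3:ℝ)/2) ^ (1 - θ i) := by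
    intro i
    have hx : (0:ℝ) < (2:ℝ) ^ (-(1:ℝ)/D) := by positivity
    have hz : (0:ℝ) < (1:ℝ)/2 := by norm_num
    have h := holder2_aux _ _ (θ i) hx hz (hθ0 i) (hθ1 i)
    have e : ((2:ℝ) ^ (-(1:ℝ)/D)) ^ (θ i) * ((1:ℝ)/2) ^ (1 - θ i) = (2:ℝ) ^ (-(y i)/D) := by
      have h12 : ((1:ℝ)/2) = (2:ℝ) ^ (-(1:ℝ)) := by
        rw [Real.rpow_neg_one]; norm_num
      rw [h12, ← Real.rpow_mul (by norm_num), ← Real.rpow_mul (by norm_num),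
        ← Real.rpow_add (by norm_num : (0:ℝ) < 2)]
      congr 1
      rw [hθ]
      field_simp
      ring
    rw [e] at h
    have h32 : (1:ℝ)/2 + 1 = (3:ℝ)/2 := by norm_num
    rw [h32] at h
    exact h
  have sum1 : ∑ i, θ i = (k * D - q) / (D - 1) := by
    rw [hθ, ← Finset.sum_div]
    congr 1
    rw [Finset.sum_sub_distrib, Finset.sum_const, Finset.card_univ, Fintype.card_fin,
      hsum, nsmul_eq_mul]
  have sum2 : ∑ i, (1 - θ i) = (q - k) / (D - 1) := by
    rw [Finset.sum_sub_distrib, Finset.sum_const, Finset.card_univ, Fintype.card_fin,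
      nsmul_eq_mul, mul_one, sum1]
    field_simp
    ring
  calc ∏ i, ((2:ℝ) ^ (-(y i)/D) + 1)
      ≤ ∏ i, ((2:ℝ) ^ (-(1:ℝ)/D) + 1) ^ (θ i) * ((3:ℝ)/2) ^ (1 - θ i) :=
        Finset.prod_le_prod (fun i _ => by positivity) (fun i _ => key i)
    _ = (∏ i, ((2:ℝ) ^ (-(1:ℝ)/D) + 1) ^ (θ i)) * ∏ i, ((3:ℝ)/2) ^ (1 - θ i) :=
        Finset.prod_mul_distrib
    _ = ((2:ℝ) ^ (-(1:ℝ)/D) + 1) ^ (∑ i, θ i) * ((3:ℝ)/2) ^ (∑ i, (1 - θ i)) := by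
        rw [Real.rpow_sum_of_pos hApos, Real.rpow_sum_of_pos hBpos]
    _ = _ := by rw [sum1, sum2]
end
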